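/- arXiv:1906.00788 — 15 statements merged into one kernel-verified Lean document; each statement's English description precedes it below -/
import Mathlib

section
/- For all integers n and m, w_{n+m} = u_n * w_{m+1} + (u_{n+1} - r*u_n) * w_m + t * u_{n-1} * w_{m-1}. -/
theorem stmt_0 (r s t a b c : ℂ) (ht : t ≠ 0)
    (w u : ℤ → ℂ)
    (hw : ∀ n : ℤ, w n = r * w (n-1) + s * w (n-2) + t * w (n-3))
    (hw0 : w 0 = a) (hw1 : w 1 = b) (hw2 : w 2 = c)
    (hu : ∀ n : ℤ, u n = r * u (n-1) + s * u (n-2) + t * u (n-3))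
    (hu0 : u 0 = 0) (hu1 : u 1 = 1) (hu2 : u 2 = r) :
    ∀ n m : ℤ, w (n + m) = u n * w (m+1) + (u (n+1) - r * u n) * w m + t * u (n-1) * w (m-1) := by
  have hw3 : ∀ k : ℤ, w (k+3) = r * w (k+2) + s * w (k+1) + t * w k := by
    intro k
    have h := hw (k+3)
    have e1 : k+3-1 = k+2 := by ring
    have e2 : k+3-2 = k+1 := by ring
    have e3 : k+3-3 = k := by ring
    rw [e1, e2, e3] at h; exact h
  have hu3 : ∀ k : ℤ, u (k+3) = r * u (k+2) + s * u (k+1) + t * u k := by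
    intro k
    have h := hu (k+3)
    have e1 : k+3-1 = k+2 := by ring
    have e2 : k+3-2 = k+1 := by ring
    have e3 : k+3-3 = k := by ring
    rw [e1, e2, e3] at h; exact h
  have hum1 : u (-1) = 0 := by
    have h := hu3 (-1)
    norm_num at h
    rw [hu2, hu1, hu0] at h
    have h2 : t * u (-1) = 0 := by linear_combination -h
    exact (mul_eq_zero.mp h2).resolve_left ht
  intro n m
  suffices H : ∀ k : ℤ,
      (w (k + m) = u k * w (m+1) + (u (k+1) - r * u k) * w m + t * u (k-1) * w (m-1))
      ∧ (w (k+1 + m) = u (k+1) * w (m+1) + (u (k+1+1) - r * u (k+1)) * w m + t * u k * w (m-1))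
      ∧ (w (k+2 + m) = u (k+2) * w (m+1) + (u (k+2+1) - r * u (k+2)) * w m + t * u (k+1) * w (m-1)) by
    exact (H n).1
  intro k
  induction k using Int.induction_on with
  | zero =>
    have h3 : u 3 = r * u 2 + s * u 1 + t * u 0 := by
      have h := hu3 0; norm_num at h; exact h
    refine ⟨?_, ?_, ?_⟩
    · norm_num [hu0, hu1, hum1]
    · norm_num [hu0, hu1, hu2]
      linear_combination (norm := ring_nf)
    · linear_combination (norm := ring_nf) hw3 (m-1) - w (m+1) * hu2 -
        w m * (h3 + s * hu1 + t * hu0) - t * w (m-1) * hu1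
  | succ k ih =>
    obtain ⟨h0, h1, h2⟩ := ih
    have hW := hw3 (k+m)
    have j3 := hu3 k
    have j4 := hu3 (k+1)
    have j2 := hu3 (k-1)
    refine ⟨?_, ?_, ?_⟩
    · linear_combination (norm := ring_nf) h1
    · linear_combination (norm := ring_nf) h2
    · linear_combination (norm := ring_nf) hW + r*h2 + s*h1 + t*h0 -
        (w (m+1) - r * w m) * j3 - w m * j4 - t * w (m-1) * j2
  | pred k ih =>
    obtain ⟨i0, i1, i2⟩ := ih
    refine ⟨?_, ?_, ?_⟩
    · refine mul_left_cancel₀ ht ?_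
      have hW := hw3 (-(k:ℤ)-1+m)
      have j0 := hu3 (-(k:ℤ))
      have j1 := hu3 (-(k:ℤ)-1)
      have j2u := hu3 (-(k:ℤ)-2)
      linear_combination (norm := ring_nf) i2 - r*i1 - s*i0 - hW +
        (w (m+1) - r * w m) * j1 + w m * j0 + t * w (m-1) * j2u
    · linear_combination (norm := ring_nf) i0
    · linear_combination (norm := ring_nf) i1
end

section
/- For every integer n, u_{-n} = (u_{n-1}^2 - u_n * u_{n-2}) / t^{n-1}. -/
theorem stmt_1 (r s t : ℂ) (ht : t ≠ 0)
    (u : ℤ → ℂ)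
    (hu : ∀ n : ℤ, u n = r * u (n-1) + s * u (n-2) + t * u (n-3))
    (hu0 : u 0 = 0) (hu1 : u 1 = 1) (hu2 : u 2 = r) :
    ∀ n : ℤ, u (-n) = (u (n-1) ^ 2 - u n * u (n-2)) / t ^ (n - 1) := by
  set f : ℤ → ℂ := fun n => u (-n) * t ^ (n - 1) with hf
  set g : ℤ → ℂ := fun n => u (n - 1) ^ 2 - u n * u (n - 2) with hg
  have hzp : ∀ m : ℤ, t ^ m = t ^ (m - 1) * t := by
    intro m
    rw [← zpow_add_one₀ ht, sub_add_cancel]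
  -- recurrence for f
  have hF : ∀ m : ℤ, f (m + 3) = t ^ 2 * f m - r * t * f (m + 1) - s * f (m + 2) := by
    intro m
    have h := hu (-m)
    rw [show -m - 1 = -(m + 1) by ring, show -m - 2 = -(m + 2) by ring,
      show -m - 3 = -(m + 3) by ring] at h
    simp only [hf]
    have q0 : t ^ m = t ^ (m - 1) * t := hzp m
    have q1 : t ^ (m + 1) = t ^ (m - 1) * t * t := by
      rw [hzp (m + 1), show m + 1 - 1 = m by ring, q0]
    have q2 : t ^ (m + 2) = t ^ (m - 1) * t * t * t := by
      rw [hzp (m + 2), show m + 2 - 1 = m + 1 by ring, q1]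
    rw [show m + 3 - 1 = m + 2 by ring, show m + 1 - 1 = m by ring,
      show m + 2 - 1 = m + 1 by ring, q2, q1, q0]
    linear_combination (-(t ^ (m - 1) * t * t)) * h
  -- recurrence for g
  have hG : ∀ m : ℤ, g (m + 3) = t ^ 2 * g m - r * t * g (m + 1) - s * g (m + 2) := by
    intro m
    have hd : u (m + 1) = r * u m + s * u (m - 1) + t * u (m - 2) := by
      have h := hu (m + 1)
      rwa [show m + 1 - 1 = m by ring, show m + 1 - 2 = m - 1 by ring,
        show m + 1 - 3 = m - 2 by ring] at h
    have he : u (m + 2) = r * u (m + 1) + s * u m + t * u (m - 1) := by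
      have h := hu (m + 2)
      rwa [show m + 2 - 1 = m + 1 by ring, show m + 2 - 2 = m by ring,
        show m + 2 - 3 = m - 1 by ring] at h
    have hq : u (m + 3) = r * u (m + 2) + s * u (m + 1) + t * u m := by
      have h := hu (m + 3)
      rwa [show m + 3 - 1 = m + 2 by ring, show m + 3 - 2 = m + 1 by ring,
        show m + 3 - 3 = m by ring] at h
    simp only [hg]
    rw [show m + 3 - 1 = m + 2 by ring, show m + 3 - 2 = m + 1 by ring,
      show m + 1 - 1 = m by ring, show m + 1 - 2 = m - 1 by ring,
      show m + 2 - 1 = m + 1 by ring, show m + 2 - 2 = m by ring,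
      hq, he, hd]
    ring
  -- initial values
  have um1 : u (-1) = 0 := by
    have h := hu 2
    rw [show (2:ℤ) - 1 = 1 by norm_num, show (2:ℤ) - 2 = 0 by norm_num,
      show (2:ℤ) - 3 = -1 by norm_num, hu0, hu1, hu2] at h
    have h2 : t * u (-1) = 0 := by linear_combination -h
    exact (mul_eq_zero.mp h2).resolve_left ht
  have um2 : t * u (-2) = 1 := by
    have h := hu 1
    rw [show (1:ℤ) - 1 = 0 by norm_num, show (1:ℤ) - 2 = -1 by norm_num,
      show (1:ℤ) - 3 = -2 by norm_num, hu0, hu1, um1] at h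
    linear_combination -h
  have base0 : f 0 = g 0 := by
    simp only [hf, hg, neg_zero, hu0]
    rw [show (0:ℤ) - 1 = -1 by norm_num, show (0:ℤ) - 2 = -2 by norm_num, um1]
    ring
  have base1 : f 1 = g 1 := by
    simp only [hf, hg]
    rw [show (1:ℤ) - 1 = 0 by norm_num, show (1:ℤ) - 2 = -1 by norm_num, um1, hu0]
    ring
  have base2 : f 2 = g 2 := by
    simp only [hf, hg]
    rw [show (2:ℤ) - 1 = 1 by norm_num, show (2:ℤ) - 2 = 0 by norm_num, hu0, hu1, hu2,
      zpow_one]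
    linear_combination um2
  -- main induction
  have claim : ∀ n : ℤ, f n = g n ∧ f (n + 1) = g (n + 1) ∧ f (n + 2) = g (n + 2) := by
    intro n
    induction n using Int.induction_on with
    | zero => exact ⟨base0, base1, base2⟩
    | succ k ih =>
      obtain ⟨h0, h1, h2⟩ := ih
      refine ⟨h1, ?_, ?_⟩
      · rw [show (k:ℤ) + 1 + 1 = k + 2 by ring]; exact h2
      · rw [show (k:ℤ) + 1 + 2 = k + 3 by ring, hF k, hG k, h0, h1, h2]
    | pred k ih =>
      obtain ⟨h0, h1, h2⟩ := ih
      refine ⟨?_, ?_, ?_⟩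
      · have hFn := hF (-(k:ℤ) - 1)
        have hGn := hG (-(k:ℤ) - 1)
        rw [show -(k:ℤ) - 1 + 3 = -k + 2 by ring, show -(k:ℤ) - 1 + 1 = -k + 0 by ring,
          show -(k:ℤ) - 1 + 2 = -k + 1 by ring] at hFn hGn
        rw [show -((k:ℤ)) + 0 = -k by ring] at hFn hGn
        have key : t ^ 2 * f (-(k:ℤ) - 1) = t ^ 2 * g (-(k:ℤ) - 1) := by
          linear_combination -hFn + hGn + h2 + r * t * h0 + s * h1
        exact mul_left_cancel₀ (pow_ne_zero 2 ht) key
      · rw [show -(k:ℤ) - 1 + 1 = -(k:ℤ) by ring]; exact h0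
      · rw [show -(k:ℤ) - 1 + 2 = -(k:ℤ) + 1 by ring]; exact h1
  intro n
  have h := (claim n).1
  simp only [hf, hg] at h
  rw [eq_div_iff (zpow_ne_zero _ ht)]
  exact h
end

section
/- For every integer n, v_{-n} = (v_n^2 - v_{2n}) / (2 t^n). -/
open Polynomial in
theorem stmt_2 (r s t : ℂ) (ht : t ≠ 0)
    (v : ℤ → ℂ)
    (hv : ∀ n : ℤ, v n = r * v (n-1) + s * v (n-2) + t * v (n-3))
    (hv0 : v 0 = 3) (hv1 : v 1 = r) (hv2 : v 2 = r ^ 2 + 2 * s) :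
    ∀ n : ℤ, v (-n) = (v n ^ 2 - v (2 * n)) / (2 * t ^ n) := by
  -- find roots of the cubic
  obtain ⟨a, ha⟩ := IsAlgClosed.exists_root (k := ℂ) (X^3 - C r * X^2 - C s * X - C t)
    (by rw [show (X^3 - C r * X^2 - C s * X - C t : ℂ[X]).degree = 3 from by compute_degree!]; norm_num)
  simp only [IsRoot, eval_sub, eval_add, eval_mul, eval_pow, eval_X, eval_C] at ha
  obtain ⟨b, hb⟩ := IsAlgClosed.exists_root (k := ℂ) (X^2 + C (a - r) * X + C (a^2 - a*r - s))
    (by rw [show (X^2 + C (a - r) * X + C (a^2 - a*r - s) : ℂ[X]).degree = 2 from by compute_degree!]; norm_num)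
  simp only [IsRoot, eval_sub, eval_add, eval_mul, eval_pow, eval_X, eval_C] at hb
  set c : ℂ := r - a - b with hc
  have e2 : a*b + a*c + b*c = -s := by rw [hc]; linear_combination -hb
  have e3 : a*b*c = t := by rw [hc]; linear_combination ha - a*hb
  have ha3 : a^3 = r*a^2 + s*a + t := by linear_combination ha
  have hb3 : b^3 = r*b^2 + s*b + t := by linear_combination (b - a) * hb + ha
  have hqc : c^2 + (a-r)*c + (a^2-a*r-s) = 0 := by rw [hc]; linear_combination hb
  have hc3 : c^3 = r*c^2 + s*c + t := by linear_combination (c - a) * hqc + ha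
  have ha0 : a ≠ 0 := by intro h; apply ht; rw [← e3, h]; ring
  have hb0 : b ≠ 0 := by intro h; apply ht; rw [← e3, h]; ring
  have hc0 : c ≠ 0 := by intro h; apply ht; rw [← e3, h]; ring
  set w : ℤ → ℂ := fun n => a ^ n + b ^ n + c ^ n with hwdef
  have key : ∀ x : ℂ, x ≠ 0 → x^3 = r*x^2 + s*x + t →
      ∀ n : ℤ, x ^ n = r * x ^ (n-1) + s * x ^ (n-2) + t * x ^ (n-3) := by
    intro x hx h3 n
    have f1 : x ^ n = x ^ (n-3) * x ^ (3:ℕ) := by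
      rw [← zpow_natCast x 3, ← zpow_add₀ hx]; congr 1; ring
    have f2 : x ^ (n-1) = x ^ (n-3) * x ^ (2:ℕ) := by
      rw [← zpow_natCast x 2, ← zpow_add₀ hx]; congr 1; ring
    have f3 : x ^ (n-2) = x ^ (n-3) * x ^ (1:ℕ) := by
      rw [← zpow_natCast x 1, ← zpow_add₀ hx]; congr 1; ring
    rw [f1, f2, f3]
    linear_combination x ^ (n-3) * h3
  have hw : ∀ n : ℤ, w n = r * w (n-1) + s * w (n-2) + t * w (n-3) := by
    intro n
    simp only [hwdef]
    rw [key a ha0 ha3 n, key b hb0 hb3 n, key c hc0 hc3 n]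
    ring
  have hw0 : w 0 = 3 := by simp [hwdef]; norm_num
  have hw1 : w 1 = r := by
    simp only [hwdef, zpow_one]
    rw [hc]; ring
  have hw2 : w 2 = r ^ 2 + 2 * s := by
    have : ∀ x : ℂ, x ^ (2:ℤ) = x * x := fun x => by
      rw [show (2:ℤ) = ((2:ℕ):ℤ) by norm_num, zpow_natCast]; ring
    simp only [hwdef, this]
    linear_combination (-2 : ℂ) * e2 + (a+b+c+r) * (by rw [hc]; ring : a+b+c = r)
  -- uniqueness
  have huniq : ∀ n : ℤ, v n = w n := by
    have P : ∀ n : ℤ, v n = w n ∧ v (n+1) = w (n+1) ∧ v (n+2) = w (n+2) := by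
      intro n
      induction n using Int.induction_on with
      | zero => refine ⟨by rw [hv0, hw0], by rw [show (0:ℤ)+1 = 1 by norm_num, hv1, hw1],
          by rw [show (0:ℤ)+2 = 2 by norm_num, hv2, hw2]⟩
      | succ k ih =>
        obtain ⟨h0, h1, h2⟩ := ih
        refine ⟨h1, by rw [show (k:ℤ)+1+1 = (k:ℤ)+2 by ring]; exact h2, ?_⟩
        have e := hv ((k:ℤ)+1+2)
        have e' := hw ((k:ℤ)+1+2)
        rw [show ((k:ℤ)+1+2)-1 = (k:ℤ)+2 by ring, show ((k:ℤ)+1+2)-2 = (k:ℤ)+1 by ring,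
          show ((k:ℤ)+1+2)-3 = (k:ℤ) by ring] at e e'
        rw [e, e', h0, h1, h2]
      | pred k ih =>
        obtain ⟨h0, h1, h2⟩ := ih
        refine ⟨?_, by rw [show -(k:ℤ)-1+1 = -(k:ℤ) by ring]; exact h0,
          by rw [show -(k:ℤ)-1+2 = -(k:ℤ)+1 by ring]; exact h1⟩
        have e := hv (-(k:ℤ)+2)
        have e' := hw (-(k:ℤ)+2)
        rw [show (-(k:ℤ)+2)-1 = -(k:ℤ)+1 by ring, show (-(k:ℤ)+2)-2 = -(k:ℤ) by ring,
          show (-(k:ℤ)+2)-3 = -(k:ℤ)-1 by ring] at e e'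
        have ht' : t * v (-(k:ℤ)-1) = t * w (-(k:ℤ)-1) := by
          linear_combination h2 - r*h1 - s*h0 - e + e'
        exact mul_left_cancel₀ ht ht' 
    exact fun n => (P n).1
  intro n
  rw [huniq, huniq, huniq]
  simp only [hwdef]
  have hzn : ∀ x : ℂ, x ≠ 0 → x ^ (2*n) = x ^ n * x ^ n := fun x hx => by
    rw [two_mul, zpow_add₀ hx]
  have hneg : ∀ x : ℂ, x ^ (-n) = (x ^ n)⁻¹ := fun x => zpow_neg x n
  rw [hzn a ha0, hzn b hb0, hzn c hc0, hneg, hneg, hneg]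
  have hABC : a ^ n * b ^ n * c ^ n = t ^ n := by
    rw [← mul_zpow, ← mul_zpow, e3]
  have hA : a ^ n ≠ 0 := zpow_ne_zero n ha0
  have hB : b ^ n ≠ 0 := zpow_ne_zero n hb0
  have hC : c ^ n ≠ 0 := zpow_ne_zero n hc0
  have htn : t ^ n ≠ 0 := zpow_ne_zero n ht
  rw [← hABC]
  field_simp
  ring
end

section
/- For all integers n, w_n = b*u_n + (c - b*r)*u_{n-1} + a*t*u_{n-2}. -/
theorem stmt_3 (r s t a b c : ℂ) (ht : t ≠ 0)
    (w u : ℤ → ℂ)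
    (hw : ∀ n : ℤ, w n = r * w (n-1) + s * w (n-2) + t * w (n-3))
    (hw0 : w 0 = a) (hw1 : w 1 = b) (hw2 : w 2 = c)
    (hu : ∀ n : ℤ, u n = r * u (n-1) + s * u (n-2) + t * u (n-3))
    (hu0 : u 0 = 0) (hu1 : u 1 = 1) (hu2 : u 2 = r) :
    ∀ n : ℤ, w n = b * u n + (c - b * r) * u (n-1) + a * t * u (n-2) := by
  -- values of u at -1 and -2
  have hum1 : u (-1) = 0 := by
    have h := hu 2
    norm_num at h
    rw [hu2, hu1, hu0] at h
    have : t * u (-1) = 0 := by linear_combination -h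
    rcases mul_eq_zero.mp this with h' | h'
    · exact absurd h' ht
    · exact h'
  have hum2 : t * u (-2) = 1 := by
    have h := hu 1
    norm_num at h
    rw [hu1, hu0, hum1] at h
    linear_combination -h
  set v : ℤ → ℂ := fun n => b * u n + (c - b * r) * u (n-1) + a * t * u (n-2) with hv
  have hrec : ∀ n : ℤ, v n = r * v (n-1) + s * v (n-2) + t * v (n-3) := by
    intro n
    simp only [hv]
    have e1 : n - 1 - 1 = n - 2 := by ring
    have e2 : n - 1 - 2 = n - 3 := by ring
    have e3 : n - 2 - 1 = n - 3 := by ring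
    have e4 : n - 2 - 2 = n - 4 := by ring
    have e5 : n - 3 - 1 = n - 4 := by ring
    have e6 : n - 3 - 2 = n - 5 := by ring
    rw [e1, e2, e3, e4, e5, e6]
    have h1 := hu n
    have h2 := hu (n-1)
    rw [e1, e2] at h2
    have h3 := hu (n-2)
    rw [e3, e4] at h3
    have h4 : n - 2 - 3 = n - 5 := by ring
    rw [h4] at h3
    rw [h1, h2, h3]
    ring
  have key : ∀ n : ℤ, w n = v n ∧ w (n+1) = v (n+1) ∧ w (n+2) = v (n+2) := by
    intro n
    induction n using Int.induction_on with
    | zero =>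
      refine ⟨?_, ?_, ?_⟩
      · show w 0 = v 0
        simp only [hv, hw0, hu0]
        norm_num [hum1]
        linear_combination -a * hum2
      · show w 1 = v 1
        simp only [hv, hw1, hu1]
        norm_num [hu0, hum1]
      · show w 2 = v 2
        simp only [hv, hw2, hu2]
        norm_num [hu1, hu0]
    | succ k ih =>
      obtain ⟨p0, p1, p2⟩ := ih
      refine ⟨p1, p2, ?_⟩
      have hWk := hw ((k:ℤ)+3)
      have hVk := hrec ((k:ℤ)+3)
      have e1 : (k:ℤ) + 3 - 1 = k + 2 := by ring
      have e2 : (k:ℤ) + 3 - 2 = k + 1 := by ring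
      have e3 : (k:ℤ) + 3 - 3 = k := by ring
      rw [e1, e2, e3] at hWk hVk
      rw [show ((k:ℤ)+1+2) = k + 3 from by ring]
      rw [hWk, hVk, p0, p1, p2]
    | pred k ih =>
      obtain ⟨p0, p1, p2⟩ := ih
      have hWk := hw (-(k:ℤ)+2)
      have hVk := hrec (-(k:ℤ)+2)
      have e1 : -(k:ℤ) + 2 - 1 = -k + 1 := by ring
      have e2 : -(k:ℤ) + 2 - 2 = -k := by ring
      have e3 : -(k:ℤ) + 2 - 3 = -k - 1 := by ring
      rw [e1, e2, e3] at hWk hVk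
      have hnew : w (-(k:ℤ) - 1) = v (-(k:ℤ) - 1) := by
        have : t * w (-(k:ℤ) - 1) = t * v (-(k:ℤ) - 1) := by
          linear_combination p2 - r * p1 - s * p0 - hWk + hVk
        exact mul_left_cancel₀ ht this
      refine ⟨hnew, ?_, ?_⟩
      · rw [show (-(k:ℤ) - 1 + 1) = -(k:ℤ) from by ring]
        exact p0
      · rw [show (-(k:ℤ) - 1 + 2) = -(k:ℤ) + 1 from by ring]
        exact p1
  intro n
  exact (key n).1
end

section
/- For all integers n, v_n = r*u_n + 2s*u_{n-1} + 3t*u_{n-2}. -/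
theorem stmt_4 (r s t : ℂ) (ht : t ≠ 0)
    (u v : ℤ → ℂ)
    (hu : ∀ n : ℤ, u n = r * u (n-1) + s * u (n-2) + t * u (n-3))
    (hu0 : u 0 = 0) (hu1 : u 1 = 1) (hu2 : u 2 = r)
    (hv : ∀ n : ℤ, v n = r * v (n-1) + s * v (n-2) + t * v (n-3))
    (hv0 : v 0 = 3) (hv1 : v 1 = r) (hv2 : v 2 = r ^ 2 + 2 * s) :
    ∀ n : ℤ, v n = r * u n + 2 * s * u (n-1) + 3 * t * u (n-2) := by
  have hu' : ∀ n : ℤ, u (n+3) = r * u (n+2) + s * u (n+1) + t * u n := by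
    intro n
    have h := hu (n+3)
    rw [show n+3-1 = n+2 by ring, show n+3-2 = n+1 by ring, show n+3-3 = n by ring] at h
    exact h
  have hv' : ∀ n : ℤ, v (n+3) = r * v (n+2) + s * v (n+1) + t * v n := by
    intro n
    have h := hv (n+3)
    rw [show n+3-1 = n+2 by ring, show n+3-2 = n+1 by ring, show n+3-3 = n by ring] at h
    exact h
  have hum1 : u (-1) = 0 := by
    have h := hu' (-1)
    norm_num [hu0, hu1, hu2] at h
    exact h.resolve_left ht
  have hum2 : t * u (-2) = 1 := by
    have h := hu' (-2)
    norm_num [hu0, hu1, hum1] at h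
    exact h.symm
  set P : ℤ → Prop := fun n => v n = r * u n + 2 * s * u (n-1) + 3 * t * u (n-2) with hP
  have fwd : ∀ n : ℤ, P n → P (n+1) → P (n+2) → P (n+3) := by
    intro n i0 i1 i2
    simp only [hP] at *
    rw [show n+1-1 = n by ring, show n+1-2 = n-1 by ring] at i1
    rw [show n+2-1 = n+1 by ring, show n+2-2 = n by ring] at i2
    rw [show n+3-1 = n+2 by ring, show n+3-2 = n+1 by ring]
    have e3 := hu' n
    have e2 : u (n+2) = r * u (n+1) + s * u n + t * u (n-1) := by
      have h := hu (n+2)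
      rw [show n+2-1 = n+1 by ring, show n+2-2 = n by ring, show n+2-3 = n-1 by ring] at h
      exact h
    have e1 : u (n+1) = r * u n + s * u (n-1) + t * u (n-2) := by
      have h := hu (n+1)
      rw [show n+1-1 = n by ring, show n+1-2 = n-1 by ring, show n+1-3 = n-2 by ring] at h
      exact h
    have f3 := hv' n
    linear_combination f3 + r * i2 + s * i1 + t * i0 - r * e3 - 2 * s * e2 - 3 * t * e1
  have bwd : ∀ n : ℤ, P n → P (n+1) → P (n+2) → P (n-1) := by
    intro n i0 i1 i2
    simp only [hP] at *
    rw [show n+1-1 = n by ring, show n+1-2 = n-1 by ring] at i1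
    rw [show n+2-1 = n+1 by ring, show n+2-2 = n by ring] at i2
    rw [show n-1-1 = n-2 by ring, show n-1-2 = n-3 by ring]
    have a3 : u (n+2) = r * u (n+1) + s * u n + t * u (n-1) := by
      have h := hu (n+2)
      rw [show n+2-1 = n+1 by ring, show n+2-2 = n by ring, show n+2-3 = n-1 by ring] at h
      exact h
    have a2 : u (n+1) = r * u n + s * u (n-1) + t * u (n-2) := by
      have h := hu (n+1)
      rw [show n+1-1 = n by ring, show n+1-2 = n-1 by ring, show n+1-3 = n-2 by ring] at h
      exact h
    have a1 := hu n
    have b3 : v (n+2) = r * v (n+1) + s * v n + t * v (n-1) := by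
      have h := hv (n+2)
      rw [show n+2-1 = n+1 by ring, show n+2-2 = n by ring, show n+2-3 = n-1 by ring] at h
      exact h
    apply mul_left_cancel₀ ht
    linear_combination -b3 + i2 - r * i1 - s * i0 + r * a3 + 2 * s * a2 + 3 * t * a1
  suffices H : ∀ n : ℤ, P n ∧ P (n+1) ∧ P (n+2) by
    intro n; exact (H n).1
  intro n
  induction n using Int.induction_on with
  | zero =>
    refine ⟨?_, ?_, ?_⟩
    · simp only [hP]
      rw [show (0:ℤ)-1 = -1 by ring, show (0:ℤ)-2 = -2 by ring, hv0, hu0, hum1]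
      linear_combination -3 * hum2
    · simp only [hP]
      norm_num [hv1, hu1, hu0, hum1]
    · simp only [hP]
      norm_num [hv2, hu2, hu1, hu0]
      ring
  | succ k ih =>
    obtain ⟨i0, i1, i2⟩ := ih
    refine ⟨?_, ?_, ?_⟩
    · rw [show (k:ℤ)+1 = k+1 by ring]; exact i1
    · rw [show (k:ℤ)+1+1 = k+2 by ring]; exact i2
    · rw [show (k:ℤ)+1+2 = k+3 by ring]; exact fwd k i0 i1 i2
  | pred k ih =>
    obtain ⟨i0, i1, i2⟩ := ih
    refine ⟨?_, ?_, ?_⟩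
    · rw [show -(k:ℤ)-1 = (-(k:ℤ))-1 by ring]; exact bwd (-(k:ℤ)) i0 i1 i2
    · rw [show -(k:ℤ)-1+1 = -(k:ℤ) by ring]; exact i0
    · rw [show -(k:ℤ)-1+2 = -(k:ℤ)+1 by ring]; exact i1
end

section
/- If α, β, γ are the (distinct) roots of x^3 - r x^2 - s x - t, then for every integer n, α^n = u_{n-1} α^2 + (u_n - r u_{n-1}) α + t u_{n-2}. -/
theorem stmt_5 (r s t α : ℂ) (ht : t ≠ 0) (hα : α ≠ 0)
    (hroot : α ^ 3 = r * α ^ 2 + s * α + t)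
    (u : ℤ → ℂ)
    (hu : ∀ n : ℤ, u n = r * u (n-1) + s * u (n-2) + t * u (n-3))
    (hu0 : u 0 = 0) (hu1 : u 1 = 1) (hu2 : u 2 = r) :
    ∀ n : ℤ, α ^ n = u (n-1) * α ^ 2 + (u n - r * u (n-1)) * α + t * u (n-2) := by
  have hm1 : u (-1) = 0 := by
    have h := hu 2
    norm_num [hu0, hu1, hu2] at h
    rcases h with h | h
    · exact absurd h ht
    · exact h
  have hm2 : t * u (-2) = 1 := by
    have h := hu 1
    norm_num [hu0, hm1] at h
    rw [hu1] at h
    exact h.symm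
  have key : ∀ n : ℤ, α * (u (n-1) * α ^ 2 + (u n - r * u (n-1)) * α + t * u (n-2))
      = u n * α ^ 2 + (u (n+1) - r * u n) * α + t * u (n-1) := by
    intro n
    have h1 := hu (n+1)
    have e1 : n + 1 - 1 = n := by ring
    have e2 : n + 1 - 2 = n - 1 := by ring
    have e3 : n + 1 - 3 = n - 2 := by ring
    rw [e1, e2, e3] at h1
    linear_combination u (n-1) * hroot - α * h1
  intro n
  induction n using Int.induction_on with
  | zero => simp [hu0, hm1, hm2]
  | succ k ih =>
    have h := key k
    rw [← ih] at h
    rw [show ((k : ℤ) + 1) = (k : ℤ) + 1 from rfl]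
    have hz : α ^ ((k : ℤ) + 1) = α * α ^ (k : ℤ) := by
      rw [zpow_add_one₀ hα]; ring
    have e1 : (k : ℤ) + 1 - 1 = (k : ℤ) := by ring
    have e2 : (k : ℤ) + 1 - 2 = (k : ℤ) - 1 := by ring
    rw [hz, h, e1, e2]
  | pred k ih =>
    have h := key (-(k : ℤ) - 1)
    have e1 : -(k : ℤ) - 1 + 1 = -(k : ℤ) := by ring
    have e2 : -(k : ℤ) - 1 - 1 = -(k : ℤ) - 2 := by ring
    rw [e1, e2, ← ih] at h
    have hz : α ^ (-(k : ℤ)) = α * α ^ (-(k : ℤ) - 1) := by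
      rw [show (-(k : ℤ)) = (-(k : ℤ) - 1) + 1 by ring, zpow_add_one₀ hα]; ring
    rw [hz] at h
    have h2 := mul_left_cancel₀ hα h
    rw [← h2, ← e2]
end

section
/- For all natural numbers k, the partial sum ∑_{j=0}^{k} w_j = (t*w_k + (r-1)*(a + b - w_{k+1}) + w_{k+2} + a*s - c) / (r + s + t - 1), provided r + s + t ≠ 1. -/
theorem stmt_6 (r s t a b c : ℂ) (ht : t ≠ 0) (hrst : r + s + t ≠ 1)
    (w : ℕ → ℂ)
    (hw : ∀ n : ℕ, 3 ≤ n → w n = r * w (n-1) + s * w (n-2) + t * w (n-3))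
    (hw0 : w 0 = a) (hw1 : w 1 = b) (hw2 : w 2 = c) :
    ∀ k : ℕ, ∑ j ∈ Finset.range (k+1), w j =
      (t * w k + (r - 1) * (a + b - w (k+1)) + w (k+2) + a * s - c) / (r + s + t - 1) := by
  have hD : r + s + t - 1 ≠ 0 := sub_ne_zero.mpr hrst
  intro k
  induction k with
  | zero =>
    simp only [Finset.sum_range_one, hw0, hw1, hw2]
    field_simp
    rw [zero_add, Finset.sum_range_one, hw0]; ring
  | succ n ih =>
    rw [Finset.sum_range_succ, ih]
    have hrec : w (n+3) = r * w (n+2) + s * w (n+1) + t * w n := by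
      have := hw (n+3) (by omega)
      simpa using this
    have h1 : n + 1 + 1 = n + 2 := by ring
    have h2 : n + 1 + 2 = n + 3 := by ring
    rw [h1, h2, hrec]
    field_simp
    ring
end

section
/- For all integers m, n, k with k ≥ 0 and any complex h with t^m h^3 - t^m v_{-m} h^2 + v_m h - 1 ≠ 0: ∑_{j=0}^{k} w_{n+jm} h^j = (t^m w_{n+km} h^{k+3} - (v_m w_{n+m+km} - w_{n+2m+km}) h^{k+2} + w_{n+m+km} h^{k+1} - t^m w_{n-m} h^2 + (v_m w_n - w_{n+m}) h - w_n) / (t^m h^3 - t^m v_{-m} h^2 + v_m h - 1). -/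
open Matrix

lemma rec_uniq (r s t : ℂ) (ht : t ≠ 0) (x : ℤ → ℂ)
    (hx : ∀ n : ℤ, x n = r * x (n-1) + s * x (n-2) + t * x (n-3))
    (h0 : x 0 = 0) (h1 : x 1 = 0) (h2 : x 2 = 0) : ∀ n : ℤ, x n = 0 := by
  have key : ∀ n : ℤ, x n = 0 ∧ x (n+1) = 0 ∧ x (n+2) = 0 := by
    intro n
    induction n using Int.induction_on with
    | zero => exact ⟨h0, h1, h2⟩
    | succ i ih =>
      obtain ⟨a0, a1, a2⟩ := ih
      refine ⟨a1, a2, ?_⟩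
      have := hx ((i:ℤ)+3)
      simp only [show ((i:ℤ)+3-1) = (i:ℤ)+2 by ring, show ((i:ℤ)+3-2) = (i:ℤ)+1 by ring,
        show ((i:ℤ)+3-3) = (i:ℤ) by ring] at this
      rw [show ((i:ℤ)+1+2) = (i:ℤ)+3 by ring, this, a0, a1, a2]; ring
    | pred i ih =>
      obtain ⟨a0, a1, a2⟩ := ih
      have := hx ((-i:ℤ)+2)
      simp only [show ((-i:ℤ)+2-1) = (-i:ℤ)+1 by ring, show ((-i:ℤ)+2-2) = (-i:ℤ) by ring,
        show ((-i:ℤ)+2-3) = (-i:ℤ)-1 by ring] at this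
      rw [a0, a1, a2] at this
      have hb : x (-(i:ℤ)-1) = 0 := by
        have h' : t * x (-(i:ℤ)-1) = 0 := by linear_combination -this
        exact (mul_eq_zero.mp h').resolve_left ht
      refine ⟨hb, ?_, ?_⟩
      · rw [show (-(i:ℤ)-1+1) = -(i:ℤ) by ring]; exact a0
      · rw [show (-(i:ℤ)-1+2) = -(i:ℤ)+1 by ring]; exact a1
  exact fun n => (key n).1

noncomputable def sig2 (A : Matrix (Fin 3) (Fin 3) ℂ) : ℂ :=
  A 0 0 * A 1 1 - A 0 1 * A 1 0 + A 0 0 * A 2 2 - A 0 2 * A 2 0 + A 1 1 * A 2 2 - A 1 2 * A 2 1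

lemma CH3 (A : Matrix (Fin 3) (Fin 3) ℂ) :
    A^3 = A.trace • A^2 - sig2 A • A + A.det • 1 := by
  ext i j
  fin_cases i <;> fin_cases j <;>
    simp [sig2, pow_succ, Matrix.mul_apply, Fin.sum_univ_three, Matrix.one_apply,
      Matrix.trace_fin_three, Matrix.det_fin_three] <;> ring

lemma trace_sq (A : Matrix (Fin 3) (Fin 3) ℂ) :
    (A^2).trace = A.trace^2 - 2 * sig2 A := by
  simp [sig2, pow_two, Matrix.trace_fin_three, Matrix.mul_apply, Fin.sum_univ_three]; ring

lemma detM (r s t : ℂ) : (!![0,1,0;0,0,1;t,s,r] : Matrix (Fin 3) (Fin 3) ℂ).det = t := by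
  simp [Matrix.det_fin_three]

lemma M3 (r s t : ℂ) : (!![0,1,0;0,0,1;t,s,r] : Matrix (Fin 3) (Fin 3) ℂ)^3
    = r • (!![0,1,0;0,0,1;t,s,r] : Matrix (Fin 3) (Fin 3) ℂ)^2
      + s • (!![0,1,0;0,0,1;t,s,r] : Matrix (Fin 3) (Fin 3) ℂ) + t • 1 := by
  ext i j
  fin_cases i <;> fin_cases j <;>
    simp [pow_succ, Matrix.mul_apply, Fin.sum_univ_three, Matrix.one_apply] <;> ring

lemma key (r s t : ℂ) (ht : t ≠ 0) (w v : ℤ → ℂ)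
    (hw : ∀ n : ℤ, w n = r * w (n-1) + s * w (n-2) + t * w (n-3))
    (hv : ∀ n : ℤ, v n = r * v (n-1) + s * v (n-2) + t * v (n-3))
    (hv0 : v 0 = 3) (hv1 : v 1 = r) (hv2 : v 2 = r ^ 2 + 2 * s) :
    ∀ m n : ℤ, w (n + 3*m) = v m * w (n + 2*m) - t^m * v (-m) * w (n + m) + t^m * w n := by
  set M : Matrix (Fin 3) (Fin 3) ℂ := !![0,1,0;0,0,1;t,s,r] with hM
  have hdet : M.det = t := detM r s t
  have hU : IsUnit M := (Matrix.isUnit_iff_isUnit_det M).mpr (by rw [hdet]; exact ht.isUnit)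
  set U : (Matrix (Fin 3) (Fin 3) ℂ)ˣ := hU.unit with hUdef
  have hUM : (U : Matrix (Fin 3) (Fin 3) ℂ) = M := hU.unit_spec
  -- powers to matrices
  have hpow : ∀ k : ℕ, ((U^(k:ℤ) : _ˣ) : Matrix (Fin 3) (Fin 3) ℂ) = M^k := by
    intro k; rw [zpow_natCast, Units.val_pow_eq_pow_val, hUM]
  -- recurrence for entries of U^m
  have hzpow3 : ∀ m : ℤ, ((U^m : _ˣ) : Matrix (Fin 3) (Fin 3) ℂ)
      = r • ((U^(m-1) : _ˣ) : Matrix (Fin 3) (Fin 3) ℂ)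
        + s • ((U^(m-2) : _ˣ) : Matrix (Fin 3) (Fin 3) ℂ)
        + t • ((U^(m-3) : _ˣ) : Matrix (Fin 3) (Fin 3) ℂ) := by
    intro m
    have e1 : U^m = U^(m-3) * U^(3:ℤ) := by rw [← _root_.zpow_add]; ring_nf
    have e2 : ((U^(3:ℤ) : _ˣ) : Matrix (Fin 3) (Fin 3) ℂ) = M^3 := hpow 3
    rw [e1, Units.val_mul, e2, M3, Matrix.mul_add, Matrix.mul_add, Matrix.mul_smul,
      Matrix.mul_smul, Matrix.mul_smul, Matrix.mul_one]
    have e3 : ((U^(m-3) : _ˣ) : Matrix (Fin 3) (Fin 3) ℂ) * M^2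
        = ((U^(m-1) : _ˣ) : Matrix (Fin 3) (Fin 3) ℂ) := by
      rw [← hpow 2, ← Units.val_mul, ← _root_.zpow_add]; ring_nf
    have e4 : ((U^(m-3) : _ˣ) : Matrix (Fin 3) (Fin 3) ℂ) * M
        = ((U^(m-2) : _ˣ) : Matrix (Fin 3) (Fin 3) ℂ) := by
      rw [← hUM, ← Units.val_mul, ← _root_.zpow_add_one]; ring_nf
    rw [e3, e4]
  -- trace = v
  have htr : ∀ m : ℤ, ((U^m : _ˣ) : Matrix (Fin 3) (Fin 3) ℂ).trace = v m := by
    have := rec_uniq r s t ht (fun m => ((U^m : _ˣ) : Matrix (Fin 3) (Fin 3) ℂ).trace - v m)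
      (by
        intro m
        rw [hzpow3 m, hv m]
        simp [Matrix.trace_add, Matrix.trace_smul]
        ring)
      (by simp [hpow 0, hv0, Matrix.trace_one])
      (by
        have := hpow 1
        norm_num at this
        simp [this, hv1, hM, Matrix.trace_fin_three])
      (by
        have := hpow 2
        norm_num at this
        simp [this, hUM, hv2, hM, Matrix.trace_fin_three, pow_two, Matrix.mul_apply,
          Fin.sum_univ_three]
        ring)
    intro m
    have h := this m
    exact sub_eq_zero.mp h
  -- det
  have hdetm : ∀ m : ℤ, ((U^m : _ˣ) : Matrix (Fin 3) (Fin 3) ℂ).det = t^m := by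
    intro m
    have : ((U^m : _ˣ) : Matrix (Fin 3) (Fin 3) ℂ).det
        = ((Units.map (Matrix.detMonoidHom) (U^m)) : ℂ) := rfl
    rw [this, map_zpow, Units.val_zpow_eq_zpow_val]
    have : ((Units.map (Matrix.detMonoidHom) U) : ℂ) = M.det := rfl
    rw [this, hdet]
  -- one-step vector relation
  have hstep : ∀ n : ℤ, M.mulVec ![w n, w (n+1), w (n+2)] = ![w (n+1), w (n+2), w (n+3)] := by
    intro n
    funext i
    fin_cases i <;>
      simp [hM, Matrix.mulVec, dotProduct, Fin.sum_univ_three]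
    have := hw (n+3)
    rw [show (n+3-1) = n+2 by ring, show (n+3-2) = n+1 by ring, show (n+3-3) = n by ring] at this
    rw [this]; ring
  -- vector zpow relation
  have hvec : ∀ (m n : ℤ), ((U^m : _ˣ) : Matrix (Fin 3) (Fin 3) ℂ).mulVec ![w n, w (n+1), w (n+2)]
      = ![w (n+m), w (n+m+1), w (n+m+2)] := by
    intro m
    induction m using Int.induction_on with
    | zero => intro n; simp [hpow 0]
    | succ i ih =>
      intro n
      have e1 : (U^((i:ℤ)+1)) = U^(i:ℤ) * U := _root_.zpow_add_one U (i:ℤ)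
      rw [e1, Units.val_mul, hUM, ← Matrix.mulVec_mulVec, hstep n]
      have := ih (n+1)
      rw [show n+1+(i:ℤ) = n+((i:ℤ)+1) by ring, show n+1+1 = n+2 by ring,
        show n+1+2 = n+3 by ring] at this
      exact this
    | pred i ih =>
      intro n
      have e1 : (U^(-(i:ℤ)-1)) * U = U^(-(i:ℤ)) := by
        rw [← _root_.zpow_add_one]; ring_nf
      have e2 : ![w n, w (n+1), w (n+2)] = M.mulVec ![w (n-1), w (n-1+1), w (n-1+2)] := by
        rw [hstep (n-1), show n-1+1 = n by ring, show n-1+2 = n+1 by ring,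
          show n-1+3 = n+2 by ring]
      rw [e2, ← hUM, Matrix.mulVec_mulVec, ← Units.val_mul, e1]
      have := ih (n-1)
      rw [show n-1+(-(i:ℤ)) = n+(-(i:ℤ)-1) by ring] at this
      exact this
  -- sigma2 identity
  have hsig : ∀ m : ℤ, sig2 ((U^m : _ˣ) : Matrix (Fin 3) (Fin 3) ℂ) = t^m * v (-m) := by
    intro m
    set A : Matrix (Fin 3) (Fin 3) ℂ := ((U^m : _ˣ) : Matrix (Fin 3) (Fin 3) ℂ) with hA
    set B : Matrix (Fin 3) (Fin 3) ℂ := ((U^(-m) : _ˣ) : Matrix (Fin 3) (Fin 3) ℂ) with hB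
    have hAB : A * B = 1 := by rw [hA, hB, ← Units.val_mul, ← _root_.zpow_add]; simp
    have h2B : A^2 * B = A := by
      rw [pow_two, Matrix.mul_assoc, hAB, Matrix.mul_one]
    have h3B : A^3 * B = A^2 := by
      rw [pow_succ, Matrix.mul_assoc, hAB, Matrix.mul_one]
    have h2 : A^2 = A.trace • A - sig2 A • (1 : Matrix (Fin 3) (Fin 3) ℂ) + A.det • B := by
      rw [← h3B, CH3 A, Matrix.add_mul, Matrix.sub_mul, Matrix.smul_mul, Matrix.smul_mul,
        Matrix.smul_mul, Matrix.one_mul, h2B, hAB]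
    have htr2 := congrArg Matrix.trace h2
    rw [trace_sq A, Matrix.trace_add, Matrix.trace_sub, Matrix.trace_smul, Matrix.trace_smul,
      Matrix.trace_smul, Matrix.trace_one] at htr2
    have hcard : (Fintype.card (Fin 3) : ℂ) = 3 := by norm_num
    have hsg : sig2 A = A.det * B.trace := by
      simp only [smul_eq_mul] at htr2
      have : A.trace ^ 2 - 2 * sig2 A
          = A.trace * A.trace - sig2 A * (Fintype.card (Fin 3)) + A.det * B.trace := htr2
      norm_num at this
      linear_combination this
    rw [hsg, hdetm m, hB, htr (-m)]
  -- finale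
  intro m n
  have hch := CH3 ((U^m : _ˣ) : Matrix (Fin 3) (Fin 3) ℂ)
  have hp3 : (((U^m : _ˣ) : Matrix (Fin 3) (Fin 3) ℂ))^3
      = ((U^(3*m) : _ˣ) : Matrix (Fin 3) (Fin 3) ℂ) := by
    rw [← Units.val_pow_eq_pow_val, ← zpow_natCast (U^m) 3, ← _root_.zpow_mul]
    norm_num [mul_comm]
  have hp2 : (((U^m : _ˣ) : Matrix (Fin 3) (Fin 3) ℂ))^2
      = ((U^(2*m) : _ˣ) : Matrix (Fin 3) (Fin 3) ℂ) := by
    rw [← Units.val_pow_eq_pow_val, ← zpow_natCast (U^m) 2, ← _root_.zpow_mul]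
    norm_num [mul_comm]
  have := congrArg (fun X : Matrix (Fin 3) (Fin 3) ℂ =>
    X.mulVec ![w n, w (n+1), w (n+2)] 0) hch
  simp only [hp3, hp2] at this
  rw [Matrix.add_mulVec, Matrix.sub_mulVec, Matrix.smul_mulVec, Matrix.smul_mulVec,
    Matrix.smul_mulVec, Matrix.one_mulVec, hvec (3*m) n, hvec (2*m) n, hvec m n] at this
  simp only [Pi.add_apply, Pi.sub_apply, Pi.smul_apply, smul_eq_mul,
    Matrix.cons_val_zero] at this
  rw [this, htr m, hsig m, hdetm m]


theorem stmt_8 (r s t a b c : ℂ) (ht : t ≠ 0)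
    (w v : ℤ → ℂ)
    (hw : ∀ n : ℤ, w n = r * w (n-1) + s * w (n-2) + t * w (n-3))
    (hw0 : w 0 = a) (hw1 : w 1 = b) (hw2 : w 2 = c)
    (hv : ∀ n : ℤ, v n = r * v (n-1) + s * v (n-2) + t * v (n-3))
    (hv0 : v 0 = 3) (hv1 : v 1 = r) (hv2 : v 2 = r ^ 2 + 2 * s) :
    ∀ (m n : ℤ) (k : ℕ) (h : ℂ),
      t ^ m * h ^ 3 - t ^ m * v (-m) * h ^ 2 + v m * h - 1 ≠ 0 →
      ∑ j ∈ Finset.range (k+1), w (n + (j : ℤ) * m) * h ^ j =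
        (t ^ m * w (n + (k : ℤ) * m) * h ^ (k+3)
          - (v m * w (n + m + (k : ℤ) * m) - w (n + 2 * m + (k : ℤ) * m)) * h ^ (k+2)
          + w (n + m + (k : ℤ) * m) * h ^ (k+1)
          - t ^ m * w (n - m) * h ^ 2
          + (v m * w n - w (n + m)) * h - w n)
        / (t ^ m * h ^ 3 - t ^ m * v (-m) * h ^ 2 + v m * h - 1) := by
  intro m n k h hD
  have K := key r s t ht w v hw hv hv0 hv1 hv2
  rw [eq_div_iff hD]
  induction k with
  | zero =>
    have K0 : w (n + 2*m) = v m * w (n + m) - t^m * v (-m) * w n + t^m * w (n - m) := by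
      have := K m (n - m)
      rw [show n-m+3*m = n+2*m by ring, show n-m+2*m = n+m by ring,
        show n-m+m = n by ring] at this
      exact this
    simp only [zero_add, Finset.sum_range_one, Nat.cast_zero, Int.natCast_zero, zero_mul,
      add_zero, pow_zero, mul_one]
    linear_combination (-h^2) * K0
  | succ k ih =>
    have KS := K m (n + (k:ℤ)*m)
    rw [show n+(k:ℤ)*m+3*m = n+2*m+((k:ℤ)+1)*m by ring,
      show n+(k:ℤ)*m+2*m = n+m+((k:ℤ)+1)*m by ring,
      show n+(k:ℤ)*m+m = n+((k:ℤ)+1)*m by ring] at KS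
    rw [Finset.sum_range_succ, add_mul]
    push_cast
    push_cast at ih
    rw [show n+m+(k:ℤ)*m = n+((k:ℤ)+1)*m by ring,
      show n+2*m+(k:ℤ)*m = n+m+((k:ℤ)+1)*m by ring] at ih
    linear_combination ih - h^(k+3) * KS
end

section
/- For all integers n, v_{2n} = u_n v_{n+1} + (u_{n+1} - r u_n) v_n + t u_{n-1} v_{n-1}. -/
theorem stmt_9 (r s t : ℂ) (ht : t ≠ 0)
    (u v : ℤ → ℂ)
    (hu : ∀ n : ℤ, u n = r * u (n-1) + s * u (n-2) + t * u (n-3))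
    (hu0 : u 0 = 0) (hu1 : u 1 = 1) (hu2 : u 2 = r)
    (hv : ∀ n : ℤ, v n = r * v (n-1) + s * v (n-2) + t * v (n-3))
    (hv0 : v 0 = 3) (hv1 : v 1 = r) (hv2 : v 2 = r ^ 2 + 2 * s) :
    ∀ n : ℤ, v (2 * n) = u n * v (n+1) + (u (n+1) - r * u n) * v n + t * u (n-1) * v (n-1) := by
  -- u at -1 is 0
  have hum1 : u (-1) = 0 := by
    have h := hu 2
    rw [show (2:ℤ)-1 = 1 by ring, show (2:ℤ)-2 = 0 by ring, show (2:ℤ)-3 = -1 by ring] at h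
    rw [hu0, hu1, hu2] at h
    have h2 : t * u (-1) = 0 := by linear_combination -h
    exact (mul_eq_zero.mp h2).resolve_left ht
  have hu3 : u 3 = r^2 + s := by
    have h := hu 3
    rw [show (3:ℤ)-1 = 2 by ring, show (3:ℤ)-2 = 1 by ring, show (3:ℤ)-3 = 0 by ring] at h
    rw [hu0, hu1, hu2] at h
    linear_combination h
  -- base cases
  have b0 : ∀ n : ℤ, v (n+0) = u 0 * v (n+1) + (u (0+1) - r * u 0) * v n + t * u (0-1) * v (n-1) := by
    intro n
    rw [show (0:ℤ)-1 = -1 by ring, show (0:ℤ)+1 = 1 by ring, add_zero]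
    rw [hu0, hu1, hum1]; ring
  have b1 : ∀ n : ℤ, v (n+1) = u 1 * v (n+1) + (u (1+1) - r * u 1) * v n + t * u (1-1) * v (n-1) := by
    intro n
    rw [show (1:ℤ)-1 = 0 by ring, show (1:ℤ)+1 = 2 by ring]
    rw [hu0, hu1, hu2]; ring
  have b2 : ∀ n : ℤ, v (n+2) = u 2 * v (n+1) + (u (2+1) - r * u 2) * v n + t * u (2-1) * v (n-1) := by
    intro n
    rw [show (2:ℤ)-1 = 1 by ring, show (2:ℤ)+1 = 3 by ring]
    rw [hu1, hu2, hu3]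
    have hv' := hv (n+2)
    rw [show n+2-1 = n+1 by ring, show n+2-2 = n by ring, show n+2-3 = n-1 by ring] at hv'
    linear_combination hv'
  -- forward step
  have fwd : ∀ m : ℤ,
      (∀ n : ℤ, v (n+m) = u m * v (n+1) + (u (m+1) - r * u m) * v n + t * u (m-1) * v (n-1)) →
      (∀ n : ℤ, v (n+(m+1)) = u (m+1) * v (n+1) + (u (m+1+1) - r * u (m+1)) * v n + t * u (m+1-1) * v (n-1)) →
      (∀ n : ℤ, v (n+(m+2)) = u (m+2) * v (n+1) + (u (m+2+1) - r * u (m+2)) * v n + t * u (m+2-1) * v (n-1)) →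
      (∀ n : ℤ, v (n+(m+3)) = u (m+3) * v (n+1) + (u (m+3+1) - r * u (m+3)) * v n + t * u (m+3-1) * v (n-1)) := by
    intro m hm hm1 hm2 n
    rw [show n+(m+3) = n+m+3 by ring, show m+3+1 = m+4 by ring, show m+3-1 = m+2 by ring]
    have H := hv (n+m+3)
    rw [show n+m+3-1 = n+m+2 by ring, show n+m+3-2 = n+m+1 by ring, show n+m+3-3 = n+m by ring] at H
    have P0 := hm n
    have P1 := hm1 n
    rw [show n+(m+1) = n+m+1 by ring, show m+1+1 = m+2 by ring, show m+1-1 = m by ring] at P1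
    have P2 := hm2 n
    rw [show n+(m+2) = n+m+2 by ring, show m+2+1 = m+3 by ring, show m+2-1 = m+1 by ring] at P2
    have G2 := hu (m+2)
    rw [show m+2-1 = m+1 by ring, show m+2-2 = m by ring, show m+2-3 = m-1 by ring] at G2
    have G3 := hu (m+3)
    rw [show m+3-1 = m+2 by ring, show m+3-2 = m+1 by ring, show m+3-3 = m by ring] at G3
    have G4 := hu (m+4)
    rw [show m+4-1 = m+3 by ring, show m+4-2 = m+2 by ring, show m+4-3 = m+1 by ring] at G4
    linear_combination H + r*P2 + s*P1 + t*P0 - v (n+1) * G3 + (r*G3 - G4) * v n - t * v (n-1) * G2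
  -- backward step
  have bwd : ∀ m : ℤ,
      (∀ n : ℤ, v (n+m) = u m * v (n+1) + (u (m+1) - r * u m) * v n + t * u (m-1) * v (n-1)) →
      (∀ n : ℤ, v (n+(m+1)) = u (m+1) * v (n+1) + (u (m+1+1) - r * u (m+1)) * v n + t * u (m+1-1) * v (n-1)) →
      (∀ n : ℤ, v (n+(m+2)) = u (m+2) * v (n+1) + (u (m+2+1) - r * u (m+2)) * v n + t * u (m+2-1) * v (n-1)) →
      (∀ n : ℤ, v (n+(m-1)) = u (m-1) * v (n+1) + (u (m-1+1) - r * u (m-1)) * v n + t * u (m-1-1) * v (n-1)) := by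
    intro m hm hm1 hm2 n
    rw [show n+(m-1) = n+m-1 by ring, show m-1+1 = m by ring, show m-1-1 = m-2 by ring]
    apply mul_left_cancel₀ ht
    have K := hv (n+m+2)
    rw [show n+m+2-1 = n+m+1 by ring, show n+m+2-2 = n+m by ring, show n+m+2-3 = n+m-1 by ring] at K
    have P0 := hm n
    have P1 := hm1 n
    rw [show n+(m+1) = n+m+1 by ring, show m+1+1 = m+2 by ring, show m+1-1 = m by ring] at P1
    have P2 := hm2 n
    rw [show n+(m+2) = n+m+2 by ring, show m+2+1 = m+3 by ring, show m+2-1 = m+1 by ring] at P2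
    have G1 := hu (m+1)
    rw [show m+1-1 = m by ring, show m+1-2 = m-1 by ring, show m+1-3 = m-2 by ring] at G1
    have G2 := hu (m+2)
    rw [show m+2-1 = m+1 by ring, show m+2-2 = m by ring, show m+2-3 = m-1 by ring] at G2
    have G3 := hu (m+3)
    rw [show m+3-1 = m+2 by ring, show m+3-2 = m+1 by ring, show m+3-3 = m by ring] at G3
    linear_combination -K + P2 - r*P1 - s*P0 + v (n+1) * G2 + (G3 - r*G2) * v n + t * v (n-1) * G1
  -- two-sided induction
  have H : ∀ m : ℤ,
      (∀ n : ℤ, v (n+m) = u m * v (n+1) + (u (m+1) - r * u m) * v n + t * u (m-1) * v (n-1)) ∧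
      (∀ n : ℤ, v (n+(m+1)) = u (m+1) * v (n+1) + (u (m+1+1) - r * u (m+1)) * v n + t * u (m+1-1) * v (n-1)) ∧
      (∀ n : ℤ, v (n+(m+2)) = u (m+2) * v (n+1) + (u (m+2+1) - r * u (m+2)) * v n + t * u (m+2-1) * v (n-1)) := by
    intro m
    induction m using Int.induction_on with
    | zero => exact ⟨b0, b1, b2⟩
    | succ i ih =>
      refine ⟨ih.2.1, ?_, ?_⟩
      · rw [show (i:ℤ)+1+1 = (i:ℤ)+2 by ring]; exact ih.2.2
      · rw [show (i:ℤ)+1+2 = (i:ℤ)+3 by ring]; exact fwd i ih.1 ih.2.1 ih.2.2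
    | pred i ih =>
      refine ⟨bwd (-i) ih.1 ih.2.1 ih.2.2, ?_, ?_⟩
      · rw [show -(i:ℤ)-1+1 = -(i:ℤ) by ring]; exact ih.1
      · rw [show -(i:ℤ)-1+2 = -(i:ℤ)+1 by ring]; exact ih.2.1
  intro n
  rw [two_mul]
  exact (H n).1 n
end

section
/- For all integers n, 2 v_{3n} = 6 t^n - v_n^3 + 3 u_n v_n v_{n+1} + 3 (u_{n+1} - r u_n) v_n^2 + 3 t u_{n-1} v_{n-1} v_n. -/
open Polynomial

theorem rec_unique' (r s t : ℂ) (ht : t ≠ 0) (f g : ℤ → ℂ)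
    (hf : ∀ n : ℤ, f n = r * f (n-1) + s * f (n-2) + t * f (n-3))
    (hg : ∀ n : ℤ, g n = r * g (n-1) + s * g (n-2) + t * g (n-3))
    (h0 : f 0 = g 0) (h1 : f 1 = g 1) (h2 : f 2 = g 2) : ∀ n : ℤ, f n = g n := by
  have fwd : ∀ n : ℤ, f n = g n → f (n+1) = g (n+1) → f (n+2) = g (n+2) → f (n+3) = g (n+3) := by
    intro n a b c
    have ef := hf (n+3); have eg := hg (n+3)
    have e1 : n+3-1 = n+2 := by ring
    have e2 : n+3-2 = n+1 := by ring
    have e3 : n+3-3 = n := by ring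
    rw [e1, e2, e3] at ef eg
    rw [ef, eg, a, b, c]
  have bwd : ∀ n : ℤ, f n = g n → f (n+1) = g (n+1) → f (n+2) = g (n+2) → f (n-1) = g (n-1) := by
    intro n a b c
    have ef := hf (n+2); have eg := hg (n+2)
    have e1 : n+2-1 = n+1 := by ring
    have e2 : n+2-2 = n := by ring
    have e3 : n+2-3 = n-1 := by ring
    rw [e1, e2, e3] at ef eg
    have : t * f (n-1) = t * g (n-1) := by
      have := ef.symm.trans (c.trans eg)
      linear_combination this - r * b - s * a
    exact mul_left_cancel₀ ht this
  have key : ∀ n : ℤ, f n = g n ∧ f (n+1) = g (n+1) ∧ f (n+2) = g (n+2) := by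
    intro n
    induction n using Int.induction_on with
    | zero => exact ⟨h0, by simpa using h1, by simpa using h2⟩
    | succ k ih =>
      obtain ⟨a, b, c⟩ := ih
      have e1 : (k:ℤ)+1+1 = k+2 := by ring
      have e2 : (k:ℤ)+1+2 = k+3 := by ring
      rw [e1, e2]
      exact ⟨b, c, fwd k a b c⟩
    | pred k ih =>
      obtain ⟨a, b, c⟩ := ih
      have e1 : (-(k:ℤ)-1)+1 = -k := by ring
      have e2 : (-(k:ℤ)-1)+2 = -k+1 := by ring
      rw [e1, e2]
      have e3 : -(k:ℤ)-1 = -k-1 := by ring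
      exact ⟨by rw [e3]; exact bwd (-k) a b c, a, b⟩
  exact fun n => (key n).1

theorem cubic_roots' (r s t : ℂ) (ht : t ≠ 0) :
    ∃ a b c : ℂ, a ≠ 0 ∧ b ≠ 0 ∧ c ≠ 0 ∧ a + b + c = r ∧ a*b + a*c + b*c = -s ∧ a*b*c = t := by
  have hdeg3 : (X^3 - C r * X^2 - C s * X - C t).degree = 3 := by compute_degree!
  obtain ⟨a, ha⟩ := Complex.exists_root (f := X^3 - C r * X^2 - C s * X - C t)
    (by rw [hdeg3]; norm_num)
  have ha' : a^3 = r * a^2 + s * a + t := by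
    simp [IsRoot] at ha
    linear_combination ha
  have ha0 : a ≠ 0 := by
    intro h; rw [h] at ha'; simp at ha'; exact ht (by linear_combination -ha')
  have hdeg2 : (X^2 - C ((r-a)^2 - 4*(t/a))).degree = 2 := by compute_degree!
  obtain ⟨d, hd⟩ := Complex.exists_root (f := X^2 - C ((r-a)^2 - 4*(t/a)))
    (by rw [hdeg2]; norm_num)
  have hd' : d^2 = (r-a)^2 - 4*(t/a) := by
    simp [IsRoot] at hd; linear_combination hd
  have hd2 : a * d^2 = a * (r-a)^2 - 4*t := by
    rw [hd']; field_simp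
  have he3 : a * (((r-a)+d)/2) * (((r-a)-d)/2) = t := by
    linear_combination -hd2/4
  have hb0 : ((r-a)+d)/2 ≠ 0 := by
    intro h; apply ht; rw [← he3, h]; ring
  have hc0 : ((r-a)-d)/2 ≠ 0 := by
    intro h; apply ht; rw [← he3, h]; ring
  refine ⟨a, ((r-a)+d)/2, ((r-a)-d)/2, ha0, hb0, hc0, by ring, ?_, he3⟩
  apply mul_left_cancel₀ ha0
  linear_combination he3 - ha'

theorem pow_rec' (r s t x : ℂ) (hx : x ≠ 0) (h3 : x^3 = r*x^2 + s*x + t) (n : ℤ) :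
    x^n = r * x^(n-1) + s * x^(n-2) + t * x^(n-3) := by
  have e0 : x^n = x^(n-3) * x^3 := by
    rw [← zpow_natCast x 3, ← zpow_add₀ hx]; congr 1; push_cast; ring
  have e1 : x^(n-1) = x^(n-3) * x^2 := by
    rw [← zpow_natCast x 2, ← zpow_add₀ hx]; congr 1; push_cast; ring
  have e2 : x^(n-2) = x^(n-3) * x^1 := by
    rw [← zpow_natCast x 1, ← zpow_add₀ hx]; congr 1; push_cast; ring
  rw [e0, e1, e2, h3]; ring

theorem stmt_10 (r s t : ℂ) (ht : t ≠ 0)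
    (u v : ℤ → ℂ)
    (hu : ∀ n : ℤ, u n = r * u (n-1) + s * u (n-2) + t * u (n-3))
    (hu0 : u 0 = 0) (hu1 : u 1 = 1) (hu2 : u 2 = r)
    (hv : ∀ n : ℤ, v n = r * v (n-1) + s * v (n-2) + t * v (n-3))
    (hv0 : v 0 = 3) (hv1 : v 1 = r) (hv2 : v 2 = r ^ 2 + 2 * s) :
    ∀ n : ℤ, 2 * v (3 * n) =
      6 * t ^ n - v n ^ 3 + 3 * u n * v n * v (n+1)
      + 3 * (u (n+1) - r * u n) * v n ^ 2 + 3 * t * u (n-1) * v (n-1) * v n := by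
  -- basic u values
  have hum1 : u (-1) = 0 := by
    have h := hu 2
    norm_num at h
    rw [hu1, hu0, hu2] at h
    apply mul_left_cancel₀ ht
    linear_combination -h
  have hu3 : u 3 = r^2 + s := by
    have h := hu 3
    norm_num at h
    rw [hu1, hu2] at h
    rw [h, hu0]; ring
  -- roots
  obtain ⟨a, b, c, ha0, hb0, hc0, he1, he2, he3⟩ := cubic_roots' r s t ht
  have ha3 : a^3 = r*a^2 + s*a + t := by linear_combination (a^2)*he1 - a*he2 + he3
  have hb3 : b^3 = r*b^2 + s*b + t := by linear_combination (b^2)*he1 - b*he2 + he3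
  have hc3 : c^3 = r*c^2 + s*c + t := by linear_combination (c^2)*he1 - c*he2 + he3
  -- v n = a^n + b^n + c^n
  have hvw : ∀ n : ℤ, v n = a^n + b^n + c^n := by
    apply rec_unique' r s t ht v (fun n => a^n + b^n + c^n) hv
    · intro n
      rw [pow_rec' r s t a ha0 ha3 n, pow_rec' r s t b hb0 hb3 n, pow_rec' r s t c hc0 hc3 n]
      ring
    · simp only [zpow_zero, hv0]; norm_num
    · simp only [zpow_one, hv1, ← he1]
    · rw [hv2, show (2:ℤ) = ((2:ℕ):ℤ) from rfl, zpow_natCast, zpow_natCast, zpow_natCast]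
      linear_combination (-(a+b+c+r))*he1 + 2*he2
  -- addition formula
  have hadd : ∀ m n : ℤ, v (n + m) =
      u n * v (m+1) + (u (n+1) - r * u n) * v m + t * u (n-1) * v (m-1) := by
    intro m
    apply rec_unique' r s t ht (fun n => v (n + m))
      (fun n => u n * v (m+1) + (u (n+1) - r * u n) * v m + t * u (n-1) * v (m-1))
    · intro n
      have h := hv (n + m)
      have e1 : n+m-1 = n-1+m := by ring
      have e2 : n+m-2 = n-2+m := by ring
      have e3 : n+m-3 = n-3+m := by ring
      rw [e1, e2, e3] at h
      exact h
    · intro n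
      have h1 := hu n
      have h2 := hu (n+1)
      have h3 := hu (n-1)
      have e1 : n+1-1 = n := by ring
      have e2 : n+1-2 = n-1 := by ring
      have e3 : n+1-3 = n-2 := by ring
      rw [e1, e2, e3] at h2
      have e4 : n-1-1 = n-2 := by ring
      have e5 : n-1-2 = n-3 := by ring
      have e6 : n-1-3 = n-4 := by ring
      rw [e4, e5, e6] at h3
      have e7 : n-1+1 = n := by ring
      have e8 : n-2+1 = n-1 := by ring
      have e9 : n-3+1 = n-2 := by ring
      have e10 : n-2-1 = n-3 := by ring
      have e11 : n-3-1 = n-4 := by ring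
      rw [e7, e8, e9, e10, e11, e4]
      linear_combination (v (m+1) - r * v m) * h1 + v m * h2 + (t * v (m-1)) * h3
    · simp only [zero_add, hu0, hu1]
      rw [show (0:ℤ)-1 = -1 from by ring, hum1]
      ring
    · simp only [hu1, hu2]
      rw [show (1:ℤ)-1 = 0 from by ring, hu0, show (1:ℤ)+1 = 2 from by ring, hu2]
      ring
    · rw [show (2:ℤ)+1 = 3 from by ring, show (2:ℤ)-1 = 1 from by ring, hu2, hu3, hu1]
      have h := hv (m+2)
      have e1 : m+2-1 = m+1 := by ring
      have e2 : m+2-2 = m := by ring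
      have e3 : m+2-3 = m-1 := by ring
      rw [e1, e2, e3] at h
      rw [show (2:ℤ)+m = m+2 from by ring, h]
      ring
  -- assemble
  intro n
  have h2n := hadd n n
  have h1 := hvw n
  have h2 : v (n+n) = (a^n)^2 + (b^n)^2 + (c^n)^2 := by
    rw [hvw (n+n), zpow_add₀ ha0, zpow_add₀ hb0, zpow_add₀ hc0]; ring
  have h3 : v (3*n) = (a^n)^3 + (b^n)^3 + (c^n)^3 := by
    rw [hvw (3*n), show (3:ℤ)*n = n+n+n from by ring, zpow_add₀ ha0, zpow_add₀ hb0,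
      zpow_add₀ hc0, zpow_add₀ ha0, zpow_add₀ hb0, zpow_add₀ hc0]
    ring
  have htn : t^n = a^n * (b^n * c^n) := by
    rw [← he3, mul_zpow, mul_zpow]; ring
  have key : 2 * v (3*n) = 6 * t^n - v n ^ 3 + 3 * v n * v (n+n) := by
    rw [h1, h2, h3, htn]; ring
  rw [key, h2n]; ring
end

section
/- For all integers n, t^{-n} (v_n^3 - v_{3n}) = t^n (v_{-n}^3 - v_{-3n}). -/
theorem aux_abc (a b c : ℂ) (ha : a ≠ 0) (hb : b ≠ 0) (hc : c ≠ 0) :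
    (a * b * c)⁻¹ * ((a + b + c) ^ 3 - ((a ^ 3) + (b ^ 3) + (c ^ 3))) =
    a * b * c * ((a⁻¹ + b⁻¹ + c⁻¹) ^ 3 - (((a ^ 3)⁻¹) + ((b ^ 3)⁻¹) + ((c ^ 3)⁻¹))) := by
  have e1 : a⁻¹ + b⁻¹ + c⁻¹ = (a*b + b*c + c*a) / (a*b*c) := by
    field_simp; ring
  have e2 : (a ^ 3)⁻¹ + (b ^ 3)⁻¹ + (c ^ 3)⁻¹ = ((a*b)^3 + (b*c)^3 + (c*a)^3) / (a*b*c)^3 := by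
    field_simp; ring
  rw [e1, e2, inv_eq_one_div]
  have habc : a * b * c ≠ 0 := by simp [ha, hb, hc]
  field_simp
  ring

open Polynomial in
theorem stmt_11 (r s t : ℂ) (ht : t ≠ 0)
    (v : ℤ → ℂ)
    (hv : ∀ n : ℤ, v n = r * v (n-1) + s * v (n-2) + t * v (n-3))
    (hv0 : v 0 = 3) (hv1 : v 1 = r) (hv2 : v 2 = r ^ 2 + 2 * s) :
    ∀ n : ℤ, t ^ (-n) * (v n ^ 3 - v (3 * n)) = t ^ n * (v (-n) ^ 3 - v (-3 * n)) := by
  -- roots of the characteristic polynomial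
  obtain ⟨x, hx⟩ : ∃ x : ℂ, x ^ 3 = r * x ^ 2 + s * x + t := by
    obtain ⟨x, hx⟩ := Complex.exists_root
      (f := X ^ 3 - C r * X ^ 2 - C s * X - C t)
      (by rw [show (X ^ 3 - C r * X ^ 2 - C s * X - C t : Polynomial ℂ).degree = 3 from by
        compute_degree!]; norm_num)
    refine ⟨x, ?_⟩
    have h := hx
    simp [Polynomial.IsRoot] at h
    linear_combination h
  obtain ⟨y, hy⟩ : ∃ y : ℂ, y ^ 2 + (x - r) * y + (x ^ 2 - r * x - s) = 0 := by
    obtain ⟨y, hy⟩ := Complex.exists_root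
      (f := X ^ 2 + C (x - r) * X + C (x ^ 2 - r * x - s))
      (by rw [show (X ^ 2 + C (x - r) * X + C (x ^ 2 - r * x - s) : Polynomial ℂ).degree = 2 from by
        compute_degree!]; norm_num)
    refine ⟨y, ?_⟩
    have h := hy
    simp [Polynomial.IsRoot] at h
    linear_combination h
  obtain ⟨z, hz⟩ : ∃ z : ℂ, z = r - x - y := ⟨_, rfl⟩
  have e1 : x + y + z = r := by linear_combination hz
  have e2 : x * y + y * z + z * x = -s := by linear_combination y * hz + x * hz - hy
  have e3 : x * y * z = t := by linear_combination x * y * hz - x * hy + hx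
  have hy3 : y ^ 3 = r * y ^ 2 + s * y + t := by
    linear_combination (y - x) * hy + hx
  have hzq : z ^ 2 + (x - r) * z + (x ^ 2 - r * x - s) = 0 := by
    linear_combination hy + (z - y) * hz
  have hz3 : z ^ 3 = r * z ^ 2 + s * z + t := by
    linear_combination (z - x) * hzq + hx
  have hx0 : x ≠ 0 := fun h => ht (by rw [← e3, h]; ring)
  have hy0 : y ≠ 0 := fun h => ht (by rw [← e3, h]; ring)
  have hz0 : z ≠ 0 := fun h => ht (by rw [← e3, h]; ring)
  -- zpow recurrence for any nonzero root
  have key : ∀ (w : ℂ), w ≠ 0 → w ^ 3 = r * w ^ 2 + s * w + t →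
      ∀ n : ℤ, w ^ n = r * w ^ (n-1) + s * w ^ (n-2) + t * w ^ (n-3) := by
    intro w hw hroot n
    have h1 : w ^ n = w ^ (n-3) * w ^ (3:ℕ) := by
      rw [← zpow_natCast w 3, ← zpow_add₀ hw]; norm_num
    have h2 : w ^ (n-1) = w ^ (n-3) * w ^ (2:ℕ) := by
      rw [← zpow_natCast w 2, ← zpow_add₀ hw]; congr 1; push_cast; ring
    have h3 : w ^ (n-2) = w ^ (n-3) * w ^ (1:ℕ) := by
      rw [← zpow_natCast w 1, ← zpow_add₀ hw]; congr 1; push_cast; ring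
    rw [h1, h2, h3, hroot]; ring
  set f : ℤ → ℂ := fun n => x ^ n + y ^ n + z ^ n with hf
  have frec : ∀ n : ℤ, f n = r * f (n-1) + s * f (n-2) + t * f (n-3) := by
    intro n
    simp only [hf]
    rw [key x hx0 hx n, key y hy0 hy3 n, key z hz0 hz3 n]; ring
  have fb0 : f 0 = 3 := by simp [hf]; norm_num
  have fb1 : f 1 = r := by simpa [hf] using e1
  have fb2 : f 2 = r ^ 2 + 2 * s := by
    simp only [hf]
    have : x ^ (2:ℤ) = x^2 ∧ y ^ (2:ℤ) = y^2 ∧ z ^ (2:ℤ) = z^2 :=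
      ⟨zpow_natCast x 2, zpow_natCast y 2, zpow_natCast z 2⟩
    rw [this.1, this.2.1, this.2.2]
    linear_combination (x + y + z + r) * e1 - 2 * e2
  have step_up : ∀ n : ℤ, v n = f n → v (n+1) = f (n+1) → v (n+2) = f (n+2) →
      v (n+3) = f (n+3) := by
    intro n h0 h1 h2
    have hV := hv (n+3)
    have hF := frec (n+3)
    rw [show n+3-1 = n+2 by ring, show n+3-2 = n+1 by ring, show n+3-3 = n by ring] at hV hF
    rw [hV, hF, h0, h1, h2]
  have step_down : ∀ n : ℤ, v (n+1) = f (n+1) → v (n+2) = f (n+2) → v (n+3) = f (n+3) →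
      v n = f n := by
    intro n h1 h2 h3
    have hV := hv (n+3)
    have hF := frec (n+3)
    rw [show n+3-1 = n+2 by ring, show n+3-2 = n+1 by ring, show n+3-3 = n by ring] at hV hF
    have : t * v n = t * f n := by linear_combination -hV + hF + h3 - r * h2 - s * h1
    exact mul_left_cancel₀ ht this
  have main : ∀ n : ℤ, v n = f n ∧ v (n+1) = f (n+1) ∧ v (n+2) = f (n+2) := by
    intro n
    induction n using Int.induction_on with
    | zero => exact ⟨by rw [hv0, fb0], by rw [show (0:ℤ)+1 = 1 by ring, hv1, fb1],
        by rw [show (0:ℤ)+2 = 2 by ring, hv2, fb2]⟩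
    | succ k ih =>
      obtain ⟨h0, h1, h2⟩ := ih
      refine ⟨h1, ?_, ?_⟩
      · rw [show (k:ℤ)+1+1 = k+2 by ring]; exact h2
      · rw [show (k:ℤ)+1+2 = k+3 by ring]; exact step_up k h0 h1 h2
    | pred k ih =>
      obtain ⟨h0, h1, h2⟩ := ih
      refine ⟨?_, ?_, ?_⟩
      · refine step_down (-(k:ℤ)-1) ?_ ?_ ?_
        · rw [show -(k:ℤ)-1+1 = -k by ring]; exact h0
        · rw [show -(k:ℤ)-1+2 = -k+1 by ring]; exact h1
        · rw [show -(k:ℤ)-1+3 = -k+2 by ring]; exact h2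
      · rw [show -(k:ℤ)-1+1 = -k by ring]; exact h0
      · rw [show -(k:ℤ)-1+2 = -k+1 by ring]; exact h1
  have hvf : ∀ n : ℤ, v n = f n := fun n => (main n).1
  intro n
  rw [hvf n, hvf (3*n), hvf (-n), hvf (-3*n)]
  simp only [hf]
  have hxn : x ^ (3*n) = (x ^ n) ^ 3 := by
    rw [show (3:ℤ)*n = n*3 by ring, zpow_mul]; exact zpow_natCast _ 3
  have hyn : y ^ (3*n) = (y ^ n) ^ 3 := by
    rw [show (3:ℤ)*n = n*3 by ring, zpow_mul]; exact zpow_natCast _ 3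
  have hzn : z ^ (3*n) = (z ^ n) ^ 3 := by
    rw [show (3:ℤ)*n = n*3 by ring, zpow_mul]; exact zpow_natCast _ 3
  have hxm : x ^ (-n) = (x ^ n)⁻¹ := by rw [zpow_neg]
  have hym : y ^ (-n) = (y ^ n)⁻¹ := by rw [zpow_neg]
  have hzm : z ^ (-n) = (z ^ n)⁻¹ := by rw [zpow_neg]
  have hxm3 : x ^ (-3*n) = ((x ^ n) ^ 3)⁻¹ := by
    rw [show (-3:ℤ)*n = -(3*n) by ring, zpow_neg, hxn]
  have hym3 : y ^ (-3*n) = ((y ^ n) ^ 3)⁻¹ := by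
    rw [show (-3:ℤ)*n = -(3*n) by ring, zpow_neg, hyn]
  have hzm3 : z ^ (-3*n) = ((z ^ n) ^ 3)⁻¹ := by
    rw [show (-3:ℤ)*n = -(3*n) by ring, zpow_neg, hzn]
  have htn : t ^ n = x ^ n * y ^ n * z ^ n := by rw [← e3, mul_zpow, mul_zpow]
  have htm : t ^ (-n) = (x ^ n * y ^ n * z ^ n)⁻¹ := by rw [zpow_neg, htn]
  rw [hxn, hyn, hzn, hxm, hym, hzm, hxm3, hym3, hzm3, htn, htm]
  have ha : x ^ n ≠ 0 := zpow_ne_zero n hx0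
  have hb : y ^ n ≠ 0 := zpow_ne_zero n hy0
  have hc : z ^ n ≠ 0 := zpow_ne_zero n hz0
  linear_combination aux_abc (x ^ n) (y ^ n) (z ^ n) ha hb hc
end

section
/- For all integers n and m, w_{n+m} = v_m w_n - t^m v_{-m} w_{n-m} + t^m w_{n-2m} (Howard's identity). -/
open Matrix

/-- Second elementary symmetric coefficient (sum of principal 2×2 minors). -/
private def e2 (A : Matrix (Fin 3) (Fin 3) ℂ) : ℂ :=
  A 0 0 * A 1 1 - A 0 1 * A 1 0 + (A 0 0 * A 2 2 - A 0 2 * A 2 0) +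
    (A 1 1 * A 2 2 - A 1 2 * A 2 1)

private lemma ch3 (A : Matrix (Fin 3) (Fin 3) ℂ) :
    A ^ 3 = A.trace • A ^ 2 - e2 A • A + A.det • 1 := by
  ext i j
  fin_cases i <;> fin_cases j <;>
    simp [e2, pow_succ, Matrix.mul_apply, Fin.sum_univ_three, Matrix.trace_fin_three,
      Matrix.det_fin_three, Matrix.one_apply] <;> ring

private lemma tr_sq (A : Matrix (Fin 3) (Fin 3) ℂ) :
    (A ^ 2).trace = A.trace ^ 2 - 2 * e2 A := by
  simp [e2, pow_two, Matrix.trace_fin_three, Matrix.mul_apply, Fin.sum_univ_three]; ring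

private lemma e2_of_inv (A B : Matrix (Fin 3) (Fin 3) ℂ) (h : A * B = 1) :
    e2 A = A.det * B.trace := by
  have hAB : A ^ 2 * B = A := by
    rw [pow_two, mul_assoc, h, mul_one]
  have h2 : A ^ 2 = A.trace • A - e2 A • 1 + A.det • B := by
    calc A ^ 2 = A ^ 2 * (A * B) := by rw [h, mul_one]
    _ = A ^ 3 * B := by rw [← mul_assoc, ← pow_succ]
    _ = (A.trace • A ^ 2 - e2 A • A + A.det • 1) * B := by rw [ch3 A]
    _ = A.trace • (A ^ 2 * B) - e2 A • (A * B) + A.det • (1 * B) := by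
        simp [add_mul, sub_mul, smul_mul_assoc]
    _ = A.trace • A - e2 A • 1 + A.det • B := by rw [hAB, h, one_mul]
  have h4 := congrArg Matrix.trace h2
  rw [tr_sq] at h4
  simp only [Matrix.trace_add, Matrix.trace_sub, Matrix.trace_smul, Matrix.trace_one,
    smul_eq_mul, Fintype.card_fin] at h4
  push_cast at h4
  linear_combination h4

/-- Uniqueness: a solution of the recurrence vanishing at 0,1,2 vanishes everywhere. -/
private lemma rec_zero (r s t : ℂ) (ht : t ≠ 0) (d : ℤ → ℂ)
    (hd : ∀ n : ℤ, d n = r * d (n - 1) + s * d (n - 2) + t * d (n - 3))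
    (h0 : d 0 = 0) (h1 : d 1 = 0) (h2 : d 2 = 0) : ∀ n : ℤ, d n = 0 := by
  have fwd : ∀ k : ℕ, d k = 0 ∧ d ((k : ℤ) + 1) = 0 ∧ d ((k : ℤ) + 2) = 0 := by
    intro k
    induction k with
    | zero => exact ⟨h0, by simpa using h1, by simpa using h2⟩
    | succ k ih =>
      obtain ⟨a, b, c⟩ := ih
      have key : d ((k : ℤ) + 3) = 0 := by
        have e := hd ((k : ℤ) + 3)
        have e1 : (k : ℤ) + 3 - 1 = (k : ℤ) + 2 := by ring
        have e2 : (k : ℤ) + 3 - 2 = (k : ℤ) + 1 := by ring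
        have e3 : (k : ℤ) + 3 - 3 = (k : ℤ) := by ring
        rw [e1, e2, e3, a, b, c] at e
        simpa using e
      refine ⟨by push_cast; simpa using b, by push_cast; simpa [add_assoc] using c, by push_cast; simpa [add_assoc] using key⟩
  have bwd : ∀ k : ℕ, d (-(k : ℤ)) = 0 ∧ d (-(k : ℤ) + 1) = 0 ∧ d (-(k : ℤ) + 2) = 0 := by
    intro k
    induction k with
    | zero => exact ⟨by simpa using h0, by simpa using h1, by simpa using h2⟩
    | succ k ih =>
      obtain ⟨a, b, c⟩ := ih
      have key : d (-(k : ℤ) - 1) = 0 := by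
        have e := hd (-(k : ℤ) + 2)
        have e1 : -(k : ℤ) + 2 - 1 = -(k : ℤ) + 1 := by ring
        have e2 : -(k : ℤ) + 2 - 2 = -(k : ℤ) := by ring
        have e3 : -(k : ℤ) + 2 - 3 = -(k : ℤ) - 1 := by ring
        rw [e1, e2, e3, a, b, c] at e
        have e' : t * d (-(k : ℤ) - 1) = 0 := by linear_combination -e
        exact (mul_eq_zero.mp e').resolve_left ht
      refine ⟨?_, ?_, ?_⟩
      · have : -((k : ℤ) + 1) = -(k : ℤ) - 1 := by ring
        rw [Nat.cast_succ, this]; exact key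
      · have : -((k : ℤ) + 1) + 1 = -(k : ℤ) := by ring
        rw [Nat.cast_succ, this]; exact a
      · have : -((k : ℤ) + 1) + 2 = -(k : ℤ) + 1 := by ring
        rw [Nat.cast_succ, this]; exact b
  intro n
  rcases Int.natAbs_eq n with hn | hn
  · rw [hn]; exact (fwd n.natAbs).1
  · rw [hn]; exact (bwd n.natAbs).1

set_option maxHeartbeats 1600000 in
theorem stmt_13 (r s t a b c : ℂ) (ht : t ≠ 0)
    (w v : ℤ → ℂ)
    (hw : ∀ n : ℤ, w n = r * w (n-1) + s * w (n-2) + t * w (n-3))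
    (hw0 : w 0 = a) (hw1 : w 1 = b) (hw2 : w 2 = c)
    (hv : ∀ n : ℤ, v n = r * v (n-1) + s * v (n-2) + t * v (n-3))
    (hv0 : v 0 = 3) (hv1 : v 1 = r) (hv2 : v 2 = r ^ 2 + 2 * s) :
    ∀ n m : ℤ, w (n + m) = v m * w n - t ^ m * v (-m) * w (n - m) + t ^ m * w (n - 2 * m) := by
  set M : Matrix (Fin 3) (Fin 3) ℂ := !![0,1,0;0,0,1;t,s,r] with hMdef
  have hdet : M.det = t := by simp [hMdef, Matrix.det_fin_three]
  have hu : IsUnit M.det := hdet ▸ ht.isUnit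
  have htr : M.trace = r := by simp [hMdef, Matrix.trace_fin_three]
  have he2M : e2 M = -s := by simp [e2, hMdef]
  -- Cayley–Hamilton for M
  have hM3 : M ^ 3 = r • M ^ 2 + s • M + t • 1 := by
    rw [ch3 M, htr, he2M, hdet, neg_smul, sub_neg_eq_add]
  -- powers additivity
  have hWadd : ∀ p q : ℤ, M ^ (p + q) = M ^ p * M ^ q := fun p q => Matrix.zpow_add hu p q
  have hcast : ∀ k : ℕ, M ^ (k : ℤ) = M ^ k := fun k => zpow_natCast M k
  -- recurrence for matrix powers
  have hrecW : ∀ k : ℤ, M ^ k = r • M ^ (k - 1) + s • M ^ (k - 2) + t • M ^ (k - 3) := by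
    intro k
    have c3 : M ^ ((3 : ℕ) : ℤ) = M ^ (3 : ℕ) := hcast 3
    have c2 : M ^ ((2 : ℕ) : ℤ) = M ^ (2 : ℕ) := hcast 2
    have h1 : M ^ k = M ^ (k - 3) * M ^ (3 : ℕ) := by
      rw [← c3, ← hWadd]; congr 1; omega
    have h2 : M ^ (k - 3) * M ^ (2 : ℕ) = M ^ (k - 1) := by
      rw [← c2, ← hWadd]; congr 1; omega
    have h3 : M ^ (k - 3) * M = M ^ (k - 2) := by
      have h4 := hWadd (k - 3) 1
      rw [zpow_one] at h4
      rw [← h4]; congr 1; omega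
    rw [h1, show M ^ (3:ℕ) = M ^ 3 from rfl, hM3, show M ^ 2 = M ^ (2:ℕ) from rfl, mul_add, mul_add, mul_smul_comm, mul_smul_comm, mul_smul_comm,
      h2, h3, mul_one]
  -- trace of powers equals v
  have hTv : ∀ k : ℤ, (M ^ k).trace = v k := by
    have hT2 : (M ^ (2 : ℤ)).trace = r ^ 2 + 2 * s := by
      have c2 : M ^ (2 : ℤ) = M * M := by
        rw [show (2 : ℤ) = 1 + 1 by norm_num, hWadd, zpow_one]
      rw [c2]
      simp [hMdef, Matrix.mul_fin_three, Matrix.trace_fin_three]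
      ring
    have := rec_zero r s t ht (fun k => (M ^ k).trace - v k)
      (by
        intro k
        have h1 := congrArg Matrix.trace (hrecW k)
        simp only [Matrix.trace_add, Matrix.trace_smul, smul_eq_mul] at h1
        have h2 := hv k
        rw [h1, h2]; ring)
      (by simp [hv0, Matrix.trace_one])
      (by simp [hv1, htr])
      (by show (M ^ (2:ℤ)).trace - v 2 = 0; rw [hT2, hv2, sub_self])
    intro k
    exact sub_eq_zero.mp (this k)
  -- determinant of powers
  have hdetW : ∀ k : ℤ, (M ^ k).det = t ^ k := by
    intro k
    induction k using Int.induction_on with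
    | zero => simp
    | succ k ih =>
      rw [Matrix.zpow_add_one hu, Matrix.det_mul, ih, hdet, zpow_add_one₀ ht]
    | pred k ih =>
      have h1 : M ^ (-(k : ℤ) - 1) = M ^ (-(k : ℤ)) * M⁻¹ := Matrix.zpow_sub_one hu (-(k : ℤ))
      rw [h1, Matrix.det_mul, ih, Matrix.det_nonsing_inv, hdet, Ring.inverse_eq_inv,
        zpow_sub_one₀ ht]
  -- e2 of powers
  have he2W : ∀ k : ℤ, e2 (M ^ k) = t ^ k * v (-k) := by
    intro k
    have hinv : M ^ k * M ^ (-k) = 1 := by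
      rw [← hWadd]; simp
    rw [e2_of_inv _ _ hinv, hdetW, hTv]
  -- the key matrix identity
  have key : ∀ k : ℤ, M ^ (3 * k) =
      v k • M ^ (2 * k) - (t ^ k * v (-k)) • M ^ k + t ^ k • 1 := by
    intro k
    have h3 : M ^ (3 * k) = (M ^ k) ^ 3 := by
      rw [mul_comm, Matrix.zpow_mul M hu, ← zpow_natCast (M ^ k) 3]
      norm_num
    have h2 : M ^ (2 * k) = (M ^ k) ^ 2 := by
      rw [mul_comm, Matrix.zpow_mul M hu, ← zpow_natCast (M ^ k) 2]
      norm_num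
    rw [h3, h2, ch3 (M ^ k), hTv, he2W, hdetW]
  -- the vector of consecutive w values
  set vec : ℤ → Fin 3 → ℂ := fun j => ![w (j - 2), w (j - 1), w j] with hvecdef
  have hstep : ∀ j : ℤ, M *ᵥ vec j = vec (j + 1) := by
    intro j
    funext i
    fin_cases i <;>
      simp [hvecdef, hMdef, Matrix.mulVec, dotProduct, Fin.sum_univ_three]
    · congr 1; omega
    · rw [hw (j + 1), show j + 1 - 1 = j by ring, show j + 1 - 2 = j - 1 by ring,
        show j + 1 - 3 = j - 2 by ring]
      ring
  have hstepinv : ∀ j : ℤ, M⁻¹ *ᵥ vec j = vec (j - 1) := by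
    intro j
    have h1 : M *ᵥ vec (j - 1) = vec j := by
      rw [hstep (j - 1)]; congr 1; ring
    calc M⁻¹ *ᵥ vec j = M⁻¹ *ᵥ (M *ᵥ vec (j - 1)) := by rw [h1]
    _ = (M⁻¹ * M) *ᵥ vec (j - 1) := Matrix.mulVec_mulVec _ _ _
    _ = vec (j - 1) := by rw [Matrix.nonsing_inv_mul M hu, Matrix.one_mulVec]
  have hvec : ∀ k : ℤ, ∀ j : ℤ, M ^ k *ᵥ vec j = vec (j + k) := by
    intro k
    induction k using Int.induction_on with
    | zero => intro j; simp [Matrix.one_mulVec]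
    | succ k ih =>
      intro j
      rw [Matrix.zpow_add_one hu, ← Matrix.mulVec_mulVec, hstep j, ih (j + 1)]
      congr 1; ring
    | pred k ih =>
      intro j
      rw [Matrix.zpow_sub_one hu, ← Matrix.mulVec_mulVec, hstepinv j, ih (j - 1)]
      congr 1; ring
  intro n m
  have hfin := congrArg (fun X => (X *ᵥ vec (n - 2 * m)) 2) (key m)
  beta_reduce at hfin
  have L : M ^ (3 * m) *ᵥ vec (n - 2 * m) = vec (n + m) := by
    rw [hvec]; congr 1; ring
  have R2 : M ^ (2 * m) *ᵥ vec (n - 2 * m) = vec n := by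
    rw [hvec]; congr 1; ring
  have R1 : M ^ m *ᵥ vec (n - 2 * m) = vec (n - m) := by
    rw [hvec]; congr 1; ring
  rw [L, Matrix.add_mulVec, Matrix.sub_mulVec, Matrix.smul_mulVec,
    Matrix.smul_mulVec, Matrix.smul_mulVec, Matrix.one_mulVec, R2, R1] at hfin
  simp only [Pi.add_apply, Pi.sub_apply, Pi.smul_apply, smul_eq_mul] at hfin
  have hv2c : ∀ j : ℤ, vec j 2 = w j := by intro j; simp [hvecdef]
  rw [hv2c, hv2c, hv2c, hv2c] at hfin
  rw [hfin]; try ring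
end

section
/- For all integers n, w_{-n} = (2 w_{2n} - 2 v_n w_n + a (v_n^2 - v_{2n})) / (2 t^n). -/
open Matrix

set_option maxHeartbeats 1000000 in
private lemma ch3aux (A : Matrix (Fin 3) (Fin 3) ℂ) :
    A ^ 3 - A.trace • A ^ 2 + (((A.trace) ^ 2 - (A ^ 2).trace) / 2) • A
      - A.det • (1 : Matrix (Fin 3) (Fin 3) ℂ) = 0 := by
  rw [pow_succ, pow_two, Matrix.eta_fin_three A]
  simp only [Matrix.mul_fin_three, Matrix.trace_fin_three_of,
    Matrix.one_fin_three, Matrix.smul_of, Matrix.smul_cons, smul_eq_mul, Matrix.smul_empty]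
  ext i j
  fin_cases i <;> fin_cases j <;>
    simp [Matrix.sub_apply, Matrix.add_apply, Matrix.det_fin_three, Matrix.vecHead,
      Matrix.vecTail] <;> ring

private lemma seqeqaux (r s t : ℂ) (ht : t ≠ 0) (f g : ℤ → ℂ)
    (hf : ∀ n : ℤ, f n = r * f (n-1) + s * f (n-2) + t * f (n-3))
    (hg : ∀ n : ℤ, g n = r * g (n-1) + s * g (n-2) + t * g (n-3))
    (h0 : f 0 = g 0) (h1 : f 1 = g 1) (h2 : f 2 = g 2) : ∀ n, f n = g n := by
  suffices h : ∀ n : ℤ, f n = g n ∧ f (n+1) = g (n+1) ∧ f (n+2) = g (n+2) by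
    intro n; exact (h n).1
  intro n
  induction n using Int.induction_on with
  | zero => exact ⟨h0, h1, h2⟩
  | succ i ih =>
    obtain ⟨e0, e1, e2⟩ := ih
    refine ⟨e1, by ring_nf; ring_nf at e2; exact e2, ?_⟩
    have e := hf ((i:ℤ)+3); have e' := hg ((i:ℤ)+3)
    have a1 : ((i:ℤ)+3) - 1 = i + 2 := by ring
    have a2 : ((i:ℤ)+3) - 2 = i + 1 := by ring
    have a3 : ((i:ℤ)+3) - 3 = i := by ring
    rw [a1, a2, a3] at e e'
    have : f ((i:ℤ)+3) = g ((i:ℤ)+3) := by rw [e, e', e0, e1, e2]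
    convert this using 2 <;> ring
  | pred i ih =>
    obtain ⟨e0, e1, e2⟩ := ih
    have e := hf (-(i:ℤ)+2); have e' := hg (-(i:ℤ)+2)
    have a1 : (-(i:ℤ)+2) - 1 = -i + 1 := by ring
    have a2 : (-(i:ℤ)+2) - 2 = -i := by ring
    have a3 : (-(i:ℤ)+2) - 3 = -i - 1 := by ring
    rw [a1, a2, a3] at e e'
    have key : f (-(i:ℤ)-1) = g (-(i:ℤ)-1) := by
      have h' : t * f (-(i:ℤ)-1) = t * g (-(i:ℤ)-1) := by
        have e1' : f (-(i:ℤ)+1) = g (-(i:ℤ)+1) := by convert e1 using 2 <;> ring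
        have e2' : f (-(i:ℤ)+2) = g (-(i:ℤ)+2) := by convert e2 using 2 <;> ring
        linear_combination e' - e + e2' - r * e1' - s * e0
      exact mul_left_cancel₀ ht h'
    exact ⟨by convert key using 2 <;> ring,
      by convert e0 using 2 <;> ring,
      by convert e1 using 2 <;> ring⟩

set_option maxHeartbeats 2000000 in
theorem stmt_15 (r s t a b c : ℂ) (ht : t ≠ 0)
    (w v : ℤ → ℂ)
    (hw : ∀ n : ℤ, w n = r * w (n-1) + s * w (n-2) + t * w (n-3))
    (hw0 : w 0 = a) (hw1 : w 1 = b) (hw2 : w 2 = c)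
    (hv : ∀ n : ℤ, v n = r * v (n-1) + s * v (n-2) + t * v (n-3))
    (hv0 : v 0 = 3) (hv1 : v 1 = r) (hv2 : v 2 = r ^ 2 + 2 * s) :
    ∀ n : ℤ, w (-n) = (2 * w (2 * n) - 2 * v n * w n + a * (v n ^ 2 - v (2 * n))) / (2 * t ^ n) := by
  set M : Matrix (Fin 3) (Fin 3) ℂ := !![0,1,0; 0,0,1; t,s,r] with hMdef
  have hdetM : M.det = t := by simp [hMdef, Matrix.det_fin_three]
  have hM : IsUnit M := (Matrix.isUnit_iff_isUnit_det M).2 (by rw [hdetM]; exact ht.isUnit)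
  set u : (Matrix (Fin 3) (Fin 3) ℂ)ˣ := hM.unit with hu
  have huval : (u : Matrix (Fin 3) (Fin 3) ℂ) = M := hM.unit_spec
  have hM3 : M ^ 3 = r • M ^ 2 + s • M + t • (1 : Matrix (Fin 3) (Fin 3) ℂ) := by
    rw [pow_succ, pow_two, hMdef]
    simp only [Matrix.mul_fin_three, Matrix.one_fin_three, Matrix.smul_of, Matrix.smul_cons,
      smul_eq_mul, Matrix.smul_empty]
    ext i j
    fin_cases i <;> fin_cases j <;>
      simp [Matrix.add_apply, Matrix.vecHead, Matrix.vecTail] <;> ring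
  have key : ∀ (j : ℤ) (m : ℕ), ((u^j : _ˣ) : Matrix (Fin 3) (Fin 3) ℂ) * (↑u)^m = ↑(u^(j+m)) := by
    intro j m
    rw [← Units.val_pow_eq_pow_val, ← Units.val_mul, ← zpow_natCast u m, ← _root_.zpow_add]
  have h3' : ((u : Matrix (Fin 3) (Fin 3) ℂ))^3
      = r • (↑u)^2 + s • (↑u)^1 + t • ((↑u):Matrix (Fin 3) (Fin 3) ℂ)^0 := by
    rw [pow_one, pow_zero, huval]; exact hM3
  have hrec : ∀ k : ℤ, ((u^k : _ˣ) : Matrix (Fin 3) (Fin 3) ℂ)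
      = r • ↑(u^(k-1)) + s • ↑(u^(k-2)) + t • ↑(u^(k-3)) := by
    intro k
    have c3 : ((u^(k-3) : _ˣ) : Matrix (Fin 3) (Fin 3) ℂ) * (↑u)^3 = ↑(u^k) := by
      rw [key]; norm_num
    have c2 : ((u^(k-3) : _ˣ) : Matrix (Fin 3) (Fin 3) ℂ) * (↑u)^2 = ↑(u^(k-1)) := by
      rw [key]; congr 1; push_cast; ring
    have c1 : ((u^(k-3) : _ˣ) : Matrix (Fin 3) (Fin 3) ℂ) * (↑u)^1 = ↑(u^(k-2)) := by
      rw [key]; congr 1; push_cast; ring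
    have c0 : ((u^(k-3) : _ˣ) : Matrix (Fin 3) (Fin 3) ℂ) * (↑u)^0 = ↑(u^(k-3)) := by
      rw [key]; congr 1; push_cast; ring
    rw [← c3, h3', mul_add, mul_add, Matrix.mul_smul, Matrix.mul_smul, Matrix.mul_smul,
      c2, c1, c0]
  -- the matrix-built sequences
  set W : ℤ → ℂ := fun k => (((u^k : _ˣ) : Matrix (Fin 3) (Fin 3) ℂ) *ᵥ ![a,b,c]) 0 with hWdef
  set V : ℤ → ℂ := fun k => Matrix.trace ((u^k : _ˣ) : Matrix (Fin 3) (Fin 3) ℂ) with hVdef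
  have hu1 : ((u^(1:ℤ) : _ˣ) : Matrix (Fin 3) (Fin 3) ℂ) = M := by rw [zpow_one, huval]
  have hu2 : ((u^(2:ℤ) : _ˣ) : Matrix (Fin 3) (Fin 3) ℂ) = M * M := by
    rw [show (2:ℤ) = 1 + 1 by norm_num, _root_.zpow_add, zpow_one, Units.val_mul, huval]
  have hWrec : ∀ n : ℤ, W n = r * W (n-1) + s * W (n-2) + t * W (n-3) := by
    intro k
    simp only [hWdef]
    rw [hrec k]
    simp [Matrix.add_mulVec, Matrix.smul_mulVec]
  have hVrec : ∀ n : ℤ, V n = r * V (n-1) + s * V (n-2) + t * V (n-3) := by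
    intro k
    simp only [hVdef]
    rw [hrec k]
    simp [Matrix.trace_add, Matrix.trace_smul, smul_eq_mul]
  have hW0 : W 0 = a := by simp [hWdef]
  have hW1 : W 1 = b := by
    simp only [hWdef, hu1, hMdef]
    simp [Matrix.mulVec, dotProduct, Fin.sum_univ_three]
  have hW2 : W 2 = c := by
    simp only [hWdef, hu2, hMdef]
    simp [Matrix.mulVec, dotProduct, Fin.sum_univ_three, Matrix.mul_apply]
  have hV0 : V 0 = 3 := by simp [hVdef]
  have hV1 : V 1 = r := by
    simp only [hVdef, hu1, hMdef]
    simp [Matrix.trace_fin_three]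
  have hV2 : V 2 = r ^ 2 + 2 * s := by
    simp only [hVdef, hu2, hMdef]
    simp [Matrix.trace_fin_three, Matrix.mul_apply, Fin.sum_univ_three]
    ring
  have hWw : ∀ n, w n = W n :=
    seqeqaux r s t ht w W hw hWrec (by rw [hw0, hW0]) (by rw [hw1, hW1]) (by rw [hw2, hW2])
  have hVv : ∀ n, v n = V n :=
    seqeqaux r s t ht v V hv hVrec (by rw [hv0, hV0]) (by rw [hv1, hV1]) (by rw [hv2, hV2])
  -- determinant of u^n
  have hdetn : ∀ n : ℤ, ((u^n : _ˣ) : Matrix (Fin 3) (Fin 3) ℂ).det = t ^ n := by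
    intro n
    have h1 : ((u^n : _ˣ) : Matrix (Fin 3) (Fin 3) ℂ).det
        = ((Units.map (Matrix.detMonoidHom) (u^n) : ℂˣ) : ℂ) := by
      rw [Units.coe_map]; rfl
    rw [h1, map_zpow, Units.val_zpow_eq_zpow_val]
    have h2 : ((Units.map (Matrix.detMonoidHom) u : ℂˣ) : ℂ) = t := by
      rw [Units.coe_map]
      simp [huval, hdetM]
    rw [h2]
  intro n
  set A : Matrix (Fin 3) (Fin 3) ℂ := ((u^n : _ˣ) : Matrix (Fin 3) (Fin 3) ℂ) with hA
  set B : Matrix (Fin 3) (Fin 3) ℂ := ((u^(-n) : _ˣ) : Matrix (Fin 3) (Fin 3) ℂ) with hB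
  have hAA : A * A = ((u^(2*n) : _ˣ) : Matrix (Fin 3) (Fin 3) ℂ) := by
    rw [hA, ← Units.val_mul, ← _root_.zpow_add]
    congr 2; ring
  have hAB : A * B = 1 := by
    rw [hA, hB, ← Units.val_mul, ← _root_.zpow_add]
    simp
  have hch := ch3aux A
  rw [sub_eq_zero] at hch
  have h4 := congrArg (fun X => X * B) hch
  simp only [sub_mul, add_mul, smul_mul_assoc, one_mul] at h4
  rw [pow_succ, pow_two, mul_assoc, hAB, mul_one, ← pow_two] at h4
  have hA2B : A ^ 2 * B = A := by rw [pow_two, mul_assoc, hAB, mul_one]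
  rw [hA2B] at h4
  have hAA' : A ^ 2 = ((u^(2*n) : _ˣ) : Matrix (Fin 3) (Fin 3) ℂ) := by rw [pow_two, hAA]
  have htr : A.trace = V n := rfl
  have htr2 : (A ^ 2).trace = V (2*n) := by rw [hAA']
  have hd : A.det = t ^ n := hdetn n
  rw [htr, htr2, hd, hAA'] at h4
  have h6 := congrArg (fun X => (X *ᵥ ![a,b,c]) 0) h4
  simp only [Matrix.sub_mulVec, Matrix.add_mulVec, Matrix.smul_mulVec,
    Matrix.one_mulVec, Pi.add_apply, Pi.sub_apply, Pi.smul_apply, smul_eq_mul,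
    Matrix.cons_val_zero] at h6
  have e1 : ((((u^(2*n) : _ˣ) : Matrix (Fin 3) (Fin 3) ℂ)) *ᵥ ![a,b,c]) 0 = W (2*n) := rfl
  have e2 : (A *ᵥ ![a,b,c]) 0 = W n := rfl
  have e3 : (B *ᵥ ![a,b,c]) 0 = W (-n) := rfl
  rw [e1, e2, e3] at h6
  -- h6 : W (2n) - V n * W n + ((V n ^ 2 - V (2n)) / 2) * a = t ^ n * W (-n)
  rw [hWw, hWw, hWw, hVv, hVv]
  have h2t : (2 : ℂ) * t ^ n ≠ 0 := by
    refine mul_ne_zero two_ne_zero (zpow_ne_zero n ht)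
  rw [eq_div_iff h2t]
  linear_combination (-2 : ℂ) * h6
end

section
/- For every natural number k and all integers n, ∑_{j=0}^{k} ∑_{i=0}^{j} C(k,j) C(j,i) t^{k-j} s^{k+j-i} r^i w_{n - 3k + j + i} = s^k w_n. -/
open Finset

private noncomputable def S18 (r s t : ℂ) (w : ℤ → ℂ) (k : ℕ) (n : ℤ) : ℂ :=
  ∑ j ∈ Finset.range (k+1), ∑ i ∈ Finset.range (j+1),
    (Nat.choose k j : ℂ) * (Nat.choose j i : ℂ) * t ^ (k - j) * s ^ (k + j - i) * r ^ i
      * w (n - 3 * (k : ℤ) + (j : ℤ) + (i : ℤ))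

private lemma choose_shift (k : ℕ) (g : ℕ → ℂ) :
    ∑ j ∈ range (k+2), (Nat.choose (k+1) j : ℂ) * g j
      = ∑ j ∈ range (k+1), (Nat.choose k j : ℂ) * g j
        + ∑ j ∈ range (k+1), (Nat.choose k j : ℂ) * g (j+1) := by
  rw [Finset.sum_range_succ' _ (k+1)]
  have h1 : ∀ j ∈ range (k+1), (Nat.choose (k+1) (j+1) : ℂ) * g (j+1)
      = (Nat.choose k j : ℂ) * g (j+1) + (Nat.choose k (j+1) : ℂ) * g (j+1) := by
    intro j _
    have : Nat.choose (k+1) (j+1) = Nat.choose k j + Nat.choose k (j+1) :=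
      Nat.choose_succ_succ k j
    rw [this]; push_cast; ring
  rw [Finset.sum_congr rfl h1, Finset.sum_add_distrib]
  have h2 : ∑ j ∈ range (k+1), (Nat.choose k (j+1) : ℂ) * g (j+1)
        + (Nat.choose (k+1) 0 : ℂ) * g 0
      = ∑ j ∈ range (k+1), (Nat.choose k j : ℂ) * g j := by
    rw [Finset.sum_range_succ (fun j => (Nat.choose k (j+1) : ℂ) * g (j+1)) k]
    simp only [Nat.choose_succ_self, Nat.cast_zero, zero_mul, add_zero,
      Nat.choose_zero_right, Nat.cast_one, one_mul]
    rw [Finset.sum_range_succ' (fun j => (Nat.choose k j : ℂ) * g j) k]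
    simp
  rw [add_assoc, h2]
  ring

private lemma S18_succ (r s t : ℂ) (w : ℤ → ℂ) (k : ℕ) (n : ℤ) :
    S18 r s t w (k+1) n
      = t * s * S18 r s t w k (n-3) + s * s * S18 r s t w k (n-2)
        + r * s * S18 r s t w k (n-1) := by
  unfold S18
  have step1 : ∑ j ∈ Finset.range (k+1+1), ∑ i ∈ Finset.range (j+1),
        (Nat.choose (k+1) j : ℂ) * (Nat.choose j i : ℂ) * t ^ (k+1 - j) * s ^ (k+1 + j - i)
          * r ^ i * w (n - 3 * ((k+1 : ℕ) : ℤ) + (j : ℤ) + (i : ℤ))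
      = ∑ j ∈ range (k+2), (Nat.choose (k+1) j : ℂ) *
          (∑ i ∈ Finset.range (j+1),
            (Nat.choose j i : ℂ) * t ^ (k+1 - j) * s ^ (k+1 + j - i)
              * r ^ i * w (n - 3 * ((k+1 : ℕ) : ℤ) + (j : ℤ) + (i : ℤ))) := by
    apply Finset.sum_congr rfl
    intro j _
    rw [Finset.mul_sum]
    apply Finset.sum_congr rfl
    intro i _
    ring
  rw [step1, choose_shift]
  have hA : ∑ j ∈ range (k+1), (Nat.choose k j : ℂ) *
        (∑ i ∈ Finset.range (j+1),
          (Nat.choose j i : ℂ) * t ^ (k+1 - j) * s ^ (k+1 + j - i)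
            * r ^ i * w (n - 3 * ((k+1 : ℕ) : ℤ) + (j : ℤ) + (i : ℤ)))
      = t * s * ∑ j ∈ Finset.range (k+1), ∑ i ∈ Finset.range (j+1),
          (Nat.choose k j : ℂ) * (Nat.choose j i : ℂ) * t ^ (k - j) * s ^ (k + j - i) * r ^ i
            * w (n - 3 - 3 * (k : ℤ) + (j : ℤ) + (i : ℤ)) := by
    rw [Finset.mul_sum]
    apply Finset.sum_congr rfl
    intro j hj
    rw [Finset.mul_sum, Finset.mul_sum]
    apply Finset.sum_congr rfl
    intro i hi
    have hj' : j ≤ k := Nat.lt_succ_iff.mp (mem_range.mp hj)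
    have hi' : i ≤ j := Nat.lt_succ_iff.mp (mem_range.mp hi)
    have e1 : k+1-j = (k-j)+1 := by omega
    have e2 : k+1+j-i = (k+j-i)+1 := by omega
    have e3 : n - 3 * ((k+1 : ℕ) : ℤ) + (j : ℤ) + (i : ℤ)
        = n - 3 - 3 * (k : ℤ) + (j : ℤ) + (i : ℤ) := by push_cast; ring
    rw [e1, e2, e3, pow_succ, pow_succ]
    ring
  have hB : ∀ j ∈ range (k+1), (Nat.choose k j : ℂ) *
        (∑ i ∈ Finset.range (j+1+1),
          (Nat.choose (j+1) i : ℂ) * t ^ (k+1 - (j+1)) * s ^ (k+1 + (j+1) - i)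
            * r ^ i * w (n - 3 * ((k+1 : ℕ) : ℤ) + ((j+1 : ℕ) : ℤ) + (i : ℤ)))
      = s * s * ∑ i ∈ Finset.range (j+1),
            (Nat.choose k j : ℂ) * (Nat.choose j i : ℂ) * t ^ (k - j) * s ^ (k + j - i) * r ^ i
              * w (n - 2 - 3 * (k : ℤ) + (j : ℤ) + (i : ℤ))
        + r * s * ∑ i ∈ Finset.range (j+1),
            (Nat.choose k j : ℂ) * (Nat.choose j i : ℂ) * t ^ (k - j) * s ^ (k + j - i) * r ^ i
              * w (n - 1 - 3 * (k : ℤ) + (j : ℤ) + (i : ℤ)) := by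
    intro j hj
    have hj' : j ≤ k := Nat.lt_succ_iff.mp (mem_range.mp hj)
    have inner1 : ∑ i ∈ Finset.range (j+1+1),
          (Nat.choose (j+1) i : ℂ) * t ^ (k+1 - (j+1)) * s ^ (k+1 + (j+1) - i)
            * r ^ i * w (n - 3 * ((k+1 : ℕ) : ℤ) + ((j+1 : ℕ) : ℤ) + (i : ℤ))
        = ∑ i ∈ range (j+2), (Nat.choose (j+1) i : ℂ) *
            (t ^ (k - j) * s ^ (k + j + 2 - i) * r ^ i
              * w (n - 2 - 3 * (k : ℤ) + (j : ℤ) + (i : ℤ))) := by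
      apply Finset.sum_congr rfl
      intro i _
      have e1 : k+1-(j+1) = k-j := by omega
      have e2 : k+1+(j+1)-i = k+j+2-i := by omega
      have e3 : n - 3 * ((k+1 : ℕ) : ℤ) + ((j+1 : ℕ) : ℤ) + (i : ℤ)
          = n - 2 - 3 * (k : ℤ) + (j : ℤ) + (i : ℤ) := by push_cast; ring
      rw [e1, e2, e3]; ring
    rw [inner1, choose_shift]
    rw [mul_add, Finset.mul_sum, Finset.mul_sum, Finset.mul_sum, Finset.mul_sum]
    congr 1
    · apply Finset.sum_congr rfl
      intro i hi
      have hi' : i ≤ j := Nat.lt_succ_iff.mp (mem_range.mp hi)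
      have e2 : k+j+2-i = (k+j-i)+2 := by omega
      rw [e2, pow_add]
      ring
    · apply Finset.sum_congr rfl
      intro i hi
      have hi' : i ≤ j := Nat.lt_succ_iff.mp (mem_range.mp hi)
      have e2 : k+j+2-(i+1) = (k+j-i)+1 := by omega
      have e3 : n - 2 - 3 * (k : ℤ) + (j : ℤ) + ((i+1 : ℕ) : ℤ)
          = n - 1 - 3 * (k : ℤ) + (j : ℤ) + (i : ℤ) := by push_cast; ring
      rw [e2, e3, pow_succ, pow_succ]
      ring
  rw [hA, Finset.sum_congr rfl hB, Finset.sum_add_distrib,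
      ← Finset.mul_sum, ← Finset.mul_sum]
  ring

private lemma S18_eq (r s t : ℂ) (w : ℤ → ℂ)
    (hw : ∀ n : ℤ, w n = r * w (n-1) + s * w (n-2) + t * w (n-3)) :
    ∀ (k : ℕ) (n : ℤ), S18 r s t w k n = s ^ k * w n := by
  intro k
  induction k with
  | zero => intro n; simp [S18]
  | succ k ih =>
    intro n
    rw [S18_succ, ih, ih, ih, hw n]
    ring

theorem stmt_18 (r s t a b c : ℂ) (ht : t ≠ 0)
    (w : ℤ → ℂ)
    (hw : ∀ n : ℤ, w n = r * w (n-1) + s * w (n-2) + t * w (n-3))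
    (hw0 : w 0 = a) (hw1 : w 1 = b) (hw2 : w 2 = c) :
    ∀ (k : ℕ) (n : ℤ),
      ∑ j ∈ Finset.range (k+1), ∑ i ∈ Finset.range (j+1),
        (Nat.choose k j : ℂ) * (Nat.choose j i : ℂ) * t ^ (k - j) * s ^ (k + j - i) * r ^ i
          * w (n - 3 * (k : ℤ) + (j : ℤ) + (i : ℤ))
      = s ^ k * w n := by
  intro k n
  exact S18_eq r s t w hw k n
end

section
/- For every natural number k and all integers n, ∑_{j=0}^{k} ∑_{i=0}^{j} (-1)^i C(k,j) C(j,i) s^{k-j} r^{j-i} w_{n + k + j + i} = (-t)^k w_n. -/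
noncomputable def Saux (r s : ℂ) (w : ℤ → ℂ) (k : ℕ) (m : ℤ) : ℂ :=
  ∑ j ∈ Finset.range (k+1), ∑ i ∈ Finset.range (j+1),
    (-1 : ℂ) ^ i * (Nat.choose k j : ℂ) * (Nat.choose j i : ℂ) * s ^ (k - j) * r ^ (j - i)
      * w (m + (j : ℤ) + (i : ℤ))

lemma key_s19 (n : ℕ) (F : ℕ → ℂ) :
    ∑ i ∈ Finset.range (n+2), ((n+1).choose i : ℂ) * F i
    = ∑ i ∈ Finset.range (n+1), (n.choose i : ℂ) * (F i + F (i+1)) := by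
  rw [Finset.sum_range_succ']
  simp only [Nat.choose_succ_succ, Nat.cast_add, add_mul, mul_add]
  rw [Finset.sum_add_distrib, Finset.sum_add_distrib]
  have h1 : ∑ i ∈ Finset.range (n+1), ((n.choose i : ℂ)) * F i
      = ∑ i ∈ Finset.range n, (n.choose (i+1) : ℂ) * F (i+1) + (n.choose 0 : ℂ) * F 0 := by
    rw [Finset.sum_range_succ']
  have h2 : ∑ i ∈ Finset.range (n+1), ((n.choose (i+1) : ℂ)) * F (i+1)
      = ∑ i ∈ Finset.range n, (n.choose (i+1) : ℂ) * F (i+1) := by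
    rw [Finset.sum_range_succ]
    simp
  rw [h1, h2]
  simp
  ring

lemma step (r s : ℂ) (w : ℤ → ℂ) (k : ℕ) (m : ℤ) :
    Saux r s w (k+1) m
      = s * Saux r s w k m + r * Saux r s w k (m+1) - Saux r s w k (m+2) := by
  unfold Saux
  have h1 : ∑ j ∈ Finset.range (k+1+1), ∑ i ∈ Finset.range (j+1),
        (-1 : ℂ) ^ i * ((k+1).choose j : ℂ) * (j.choose i : ℂ) * s ^ (k+1-j) * r ^ (j-i)
          * w (m + (j : ℤ) + (i : ℤ))
      = ∑ j ∈ Finset.range (k+2), ((k+1).choose j : ℂ) *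
          ∑ i ∈ Finset.range (j+1),
            (-1 : ℂ) ^ i * (j.choose i : ℂ) * s ^ (k+1-j) * r ^ (j-i)
              * w (m + (j : ℤ) + (i : ℤ)) := by
    refine Finset.sum_congr rfl fun j _ => ?_
    rw [Finset.mul_sum]
    exact Finset.sum_congr rfl fun i _ => by ring
  rw [h1, key_s19]
  rw [Finset.mul_sum, Finset.mul_sum, ← Finset.sum_add_distrib, ← Finset.sum_sub_distrib]
  refine Finset.sum_congr rfl fun j hj => ?_
  have hjk : j ≤ k := Nat.lt_succ_iff.mp (Finset.mem_range.mp hj)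
  have h2 : (∑ i ∈ Finset.range ((j+1)+1),
        (-1 : ℂ) ^ i * ((j+1).choose i : ℂ) * s ^ (k+1-(j+1)) * r ^ ((j+1)-i)
          * w (m + ((j+1 : ℕ) : ℤ) + (i : ℤ)))
      = ∑ i ∈ Finset.range (j+1), (j.choose i : ℂ) *
          (((-1 : ℂ) ^ i * s ^ (k-j) * r ^ (j+1-i) * w (m + ((j+1 : ℕ) : ℤ) + (i : ℤ)))
            + ((-1 : ℂ) ^ (i+1) * s ^ (k-j) * r ^ (j+1-(i+1))
                * w (m + ((j+1 : ℕ) : ℤ) + ((i+1 : ℕ) : ℤ)))) := by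
    rw [← key_s19 j (fun i => (-1 : ℂ) ^ i * s ^ (k-j) * r ^ (j+1-i)
          * w (m + ((j+1 : ℕ) : ℤ) + (i : ℤ)))]
    refine Finset.sum_congr rfl fun i _ => ?_
    have hkj : k+1-(j+1) = k - j := by omega
    rw [hkj]
    ring
  rw [h2, ← Finset.sum_add_distrib, Finset.mul_sum, Finset.mul_sum, Finset.mul_sum,
    ← Finset.sum_add_distrib, ← Finset.sum_sub_distrib]
  refine Finset.sum_congr rfl fun i hi => ?_
  have hij : i ≤ j := Nat.lt_succ_iff.mp (Finset.mem_range.mp hi)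
  have e1 : k+1-j = (k-j)+1 := by omega
  have e2 : j+1-i = (j-i)+1 := by omega
  have e3 : j+1-(i+1) = j-i := by omega
  have a1 : m + ((j+1 : ℕ) : ℤ) + (i : ℤ) = m + 1 + (j : ℤ) + (i : ℤ) := by push_cast; ring
  have a2 : m + ((j+1 : ℕ) : ℤ) + ((i+1 : ℕ) : ℤ) = m + 2 + (j : ℤ) + (i : ℤ) := by
    push_cast; ring
  rw [e1, e2, e3, a1, a2, pow_succ' s, pow_succ' r]
  ring

lemma mainaux (r s t : ℂ) (w : ℤ → ℂ)
    (hw : ∀ n : ℤ, w n = r * w (n-1) + s * w (n-2) + t * w (n-3)) :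
    ∀ (k : ℕ) (n : ℤ), Saux r s w k (n + (k : ℤ)) = (-t) ^ k * w n := by
  intro k
  induction k with
  | zero => intro n; simp [Saux]
  | succ k ih =>
    intro n
    have h3 := hw (n+3)
    rw [show n+3-1 = n+2 by ring, show n+3-2 = n+1 by ring, show n+3-3 = n by ring] at h3
    rw [step]
    rw [show n + ((k+1 : ℕ) : ℤ) = (n+1) + (k : ℤ) by push_cast; ring]
    rw [show (n+1) + (k : ℤ) + 1 = (n+2) + (k : ℤ) by ring]
    rw [show (n+1) + (k : ℤ) + 2 = (n+3) + (k : ℤ) by ring]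
    rw [ih (n+1), ih (n+2), ih (n+3)]
    linear_combination (-(-t)^k) * h3

theorem stmt_19 (r s t a b c : ℂ) (ht : t ≠ 0)
    (w : ℤ → ℂ)
    (hw : ∀ n : ℤ, w n = r * w (n-1) + s * w (n-2) + t * w (n-3))
    (hw0 : w 0 = a) (hw1 : w 1 = b) (hw2 : w 2 = c) :
    ∀ (k : ℕ) (n : ℤ),
      ∑ j ∈ Finset.range (k+1), ∑ i ∈ Finset.range (j+1),
        (-1 : ℂ) ^ i * (Nat.choose k j : ℂ) * (Nat.choose j i : ℂ) * s ^ (k - j) * r ^ (j - i)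
          * w (n + (k : ℤ) + (j : ℤ) + (i : ℤ))
      = (-t) ^ k * w n := by
  intro k n
  exact mainaux r s t w hw k n
end
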